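/- arXiv:2010.08812 — 10 statements merged into one kernel-verified Lean document; each statement's English description precedes it below -/
import Mathlib

section
/- If A is a subset of a perfect Polish space X such that for every sequence {K_n : n ∈ ℕ} of pairwise disjoint Cantor sets (homeomorphic copies of 2^ℕ) in X there exist closed sets F_n in X with A ⊆ ⋃_n F_n and K_m ⊄ F_n for all m, n, then A is an s₀-set: every perfect subset P of X contains a Cantor set K with K ∩ A = ∅. -/
open Set

/-- An `Fσ` set: a countable union of closed sets. -/
def IsFsigma {X : Type*} [TopologicalSpace X] (F : Set X) : Prop :=
  ∃ s : ℕ → Set X, (∀ n, IsClosed (s n)) ∧ F = ⋃ n, s n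

/-- A perfect set in the classical sense: nonempty, closed, without isolated points. -/
def PerfectSet {X : Type*} [TopologicalSpace X] (P : Set X) : Prop :=
  Perfect P ∧ P.Nonempty

/-- A Cantor set: a subset homeomorphic to the Cantor space `2^ℕ`
(hence nonempty and compact). -/
def IsCantorSet {X : Type*} [TopologicalSpace X] (K : Set X) : Prop :=
  Nonempty ((ℕ → Bool) ≃ₜ K)


namespace S0Aux

/-- Interleave two binary sequences. -/
def interleave (y z : ℕ → Bool) : ℕ → Bool := fun i =>
  if i % 2 = 0 then y (i / 2) else z (i / 2)

lemma interleave_even (y z : ℕ → Bool) (i : ℕ) : interleave y z (2 * i) = y i := by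
  unfold interleave
  rw [if_pos (by omega)]
  congr 1
  omega

lemma interleave_odd (y z : ℕ → Bool) (i : ℕ) : interleave y z (2 * i + 1) = z i := by
  unfold interleave
  rw [if_neg (by omega)]
  congr 1
  omega

/-- Prepend a finite prefix to a binary sequence. -/
def withPrefix (σ : List Bool) (y : ℕ → Bool) : ℕ → Bool := fun i =>
  if i < σ.length then σ.getD i false else y (i - σ.length)

lemma withPrefix_lt (σ : List Bool) (y : ℕ → Bool) (i : ℕ) (h : i < σ.length) :
    withPrefix σ y i = σ.getD i false := by
  unfold withPrefix; rw [if_pos h]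

lemma withPrefix_add (σ : List Bool) (y : ℕ → Bool) (i : ℕ) :
    withPrefix σ y (σ.length + i) = y i := by
  unfold withPrefix
  rw [if_neg (by omega)]
  congr 1
  omega

/-- A point of the cylinder determined by `τ`, tagged (injectively) by `n`. -/
def tag (τ : List Bool) (n : ℕ) : ℕ → Bool := fun i =>
  if i < τ.length then τ.getD i false
  else if i = 2 * τ.length + 1 then true
  else if i = 2 * τ.length + 2 + n then true
  else false

lemma tag_lt (τ : List Bool) (n : ℕ) (i : ℕ) (h : i < τ.length) :
    tag τ n i = τ.getD i false := by
  unfold tag; rw [if_pos h]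

lemma tag_inj_aux {τ τ' : List Bool} {n n' : ℕ} (hle : τ.length ≤ τ'.length)
    (he : tag τ n = tag τ' n') : n = n' := by
  set k := τ.length with hk
  set l := τ'.length with hl
  have h1 : tag τ' n' (2 * l + 1) = true := by
    unfold tag; rw [if_neg (by omega), if_pos rfl]
  have h2 : tag τ n (2 * l + 1) = true := by rw [he]; exact h1
  unfold tag at h2
  rw [if_neg (by omega)] at h2
  split_ifs at h2 with c2 c3
  · -- 2l+1 = 2k+1, so k = l
    have hkl : k = l := by omega
    have h3 : tag τ' n' (2 * l + 2 + n') = true := by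
      unfold tag; rw [if_neg (by omega), if_neg (by omega), if_pos rfl]
    have h4 : tag τ n (2 * l + 2 + n') = true := by rw [he]; exact h3
    unfold tag at h4
    rw [if_neg (by omega), if_neg (by omega)] at h4
    by_cases c : 2 * l + 2 + n' = 2 * k + 2 + n
    · omega
    · rw [if_neg c] at h4; exact absurd h4 (by simp)
  · -- 2l+1 = 2k+2+n
    have h3 : tag τ' n' (2 * l + 2 + n') = true := by
      unfold tag; rw [if_neg (by omega), if_neg (by omega), if_pos rfl]
    have h4 : tag τ n (2 * l + 2 + n') = true := by rw [he]; exact h3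
    unfold tag at h4
    rw [if_neg (by omega), if_neg (by omega), if_neg (by omega)] at h4
    exact absurd h4 (by simp)

lemma tag_inj {τ τ' : List Bool} {n n' : ℕ} (he : tag τ n = tag τ' n') : n = n' := by
  rcases le_total τ.length τ'.length with hle | hle
  · exact tag_inj_aux hle he
  · exact (tag_inj_aux hle he.symm).symm

end S0Aux
open Set Function Filter Topology PiNat CantorScheme
open scoped ENNReal

namespace S0Aux

/-- Construction of the tree of open sets for the Cantor scheme. -/
theorem aux_tree {X : Type*} [MetricSpace X] (C : Set X) (hCne : C.Nonempty)
    (O : ℕ → Set X)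
    (step : ∀ U : Set X, IsOpen U → (U ∩ C).Nonempty → ∀ (jj : ℕ) (ε : ℝ), 0 < ε →
      ∃ V₀ V₁ : Set X,
        (IsOpen V₀ ∧ (V₀ ∩ C).Nonempty ∧ V₀ ⊆ U ∧ closure V₀ ⊆ O jj ∧
          EMetric.diam V₀ ≤ ENNReal.ofReal ε) ∧
        (IsOpen V₁ ∧ (V₁ ∩ C).Nonempty ∧ V₁ ⊆ U ∧ closure V₁ ⊆ O jj ∧
          EMetric.diam V₁ ≤ ENNReal.ofReal ε) ∧
        Disjoint (closure V₀) (closure V₁)) :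
    ∃ T : List Bool → Set X, T [] = univ ∧ (∀ l, (T l ∩ C).Nonempty) ∧
      (∀ l a, T (a :: l) ⊆ T l) ∧
      (∀ l a, closure (T (a :: l)) ⊆ O l.length) ∧
      (∀ l a, EMetric.diam (T (a :: l)) ≤ ENNReal.ofReal ((1 / 2) ^ (l.length + 1))) ∧
      (∀ l, Disjoint (closure (T (false :: l))) (closure (T (true :: l)))) := by
  choose V0 V1 h0 h1 h01 using step
  have εpos : ∀ m : ℕ, (0 : ℝ) < (1 / 2) ^ m := fun m => by positivity
  let Q := Subtype fun E : Set X => IsOpen E ∧ (E ∩ C).Nonempty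
  let T : List Bool → Q := fun l =>
    List.rec (motive := fun _ => Q) ⟨univ, isOpen_univ, by simpa using hCne⟩
      (fun a l ih =>
        Bool.rec (motive := fun _ => Q)
          ⟨V0 ih.val ih.property.1 ih.property.2 l.length ((1 / 2) ^ (l.length + 1))
            (εpos _),
            (h0 ih.val ih.property.1 ih.property.2 l.length _ (εpos _)).1,
            (h0 ih.val ih.property.1 ih.property.2 l.length _ (εpos _)).2.1⟩
          ⟨V1 ih.val ih.property.1 ih.property.2 l.length ((1 / 2) ^ (l.length + 1))
            (εpos _),
            (h1 ih.val ih.property.1 ih.property.2 l.length _ (εpos _)).1,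
            (h1 ih.val ih.property.1 ih.property.2 l.length _ (εpos _)).2.1⟩
          a) l
  have hTfalse : ∀ l : List Bool, (T (false :: l)).val =
      V0 (T l).val (T l).property.1 (T l).property.2 l.length ((1 / 2) ^ (l.length + 1))
        (εpos _) := fun l => rfl
  have hTtrue : ∀ l : List Bool, (T (true :: l)).val =
      V1 (T l).val (T l).property.1 (T l).property.2 l.length ((1 / 2) ^ (l.length + 1))
        (εpos _) := fun l => rfl
  refine ⟨fun l => (T l).val, rfl, fun l => (T l).property.2, ?_, ?_, ?_, ?_⟩
  · intro l a
    cases a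
    · show (T (false :: l)).val ⊆ (T l).val
      rw [hTfalse l]
      exact (h0 (T l).val (T l).property.1 (T l).property.2 l.length _ (εpos _)).2.2.1
    · show (T (true :: l)).val ⊆ (T l).val
      rw [hTtrue l]
      exact (h1 (T l).val (T l).property.1 (T l).property.2 l.length _ (εpos _)).2.2.1
  · intro l a
    cases a
    · show closure (T (false :: l)).val ⊆ O l.length
      rw [hTfalse l]
      exact (h0 (T l).val (T l).property.1 (T l).property.2 l.length _ (εpos _)).2.2.2.1
    · show closure (T (true :: l)).val ⊆ O l.length
      rw [hTtrue l]
      exact (h1 (T l).val (T l).property.1 (T l).property.2 l.length _ (εpos _)).2.2.2.1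
  · intro l a
    cases a
    · show EMetric.diam (T (false :: l)).val ≤ ENNReal.ofReal ((1 / 2) ^ (l.length + 1))
      rw [hTfalse l]
      exact (h0 (T l).val (T l).property.1 (T l).property.2 l.length _ (εpos _)).2.2.2.2
    · show EMetric.diam (T (true :: l)).val ≤ ENNReal.ofReal ((1 / 2) ^ (l.length + 1))
      rw [hTtrue l]
      exact (h1 (T l).val (T l).property.1 (T l).property.2 l.length _ (εpos _)).2.2.2.2
  · intro l
    show Disjoint (closure (T (false :: l)).val) (closure (T (true :: l)).val)
    rw [hTfalse l, hTtrue l]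
    exact h01 (T l).val (T l).property.1 (T l).property.2 l.length _ (εpos _)

end S0Aux
namespace S0Aux

theorem aux_scheme {X : Type*} [MetricSpace X] [CompleteSpace X] (C : Set X)
    (hCcl : IsClosed C) (hCne : C.Nonempty) (O : ℕ → Set X) (hO : ∀ j, IsOpen (O j))
    (hstar : ∀ U : Set X, IsOpen U → (U ∩ C).Nonempty → ∀ j, ((U ∩ O j) ∩ C).Nonempty)
    (htwo : ∀ U : Set X, IsOpen U → (U ∩ C).Nonempty →
      ∃ x₀ x₁ : X, x₀ ∈ U ∩ C ∧ x₁ ∈ U ∩ C ∧ x₀ ≠ x₁) :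
    ∃ g : (ℕ → Bool) → X, Continuous g ∧ Function.Injective g ∧ range g ⊆ C ∧
      ∀ j, range g ⊆ O j := by
  have step : ∀ U : Set X, IsOpen U → (U ∩ C).Nonempty → ∀ (jj : ℕ) (ε : ℝ), 0 < ε →
      ∃ V₀ V₁ : Set X,
        (IsOpen V₀ ∧ (V₀ ∩ C).Nonempty ∧ V₀ ⊆ U ∧ closure V₀ ⊆ O jj ∧
          EMetric.diam V₀ ≤ ENNReal.ofReal ε) ∧
        (IsOpen V₁ ∧ (V₁ ∩ C).Nonempty ∧ V₁ ⊆ U ∧ closure V₁ ⊆ O jj ∧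
          EMetric.diam V₁ ≤ ENNReal.ofReal ε) ∧
        Disjoint (closure V₀) (closure V₁) := by
    intro U hU hUne jj ε hε
    obtain ⟨x₀, x₁, hx₀, hx₁, hne⟩ := htwo U hU hUne
    have hd : 0 < dist x₀ x₁ := dist_pos.2 hne
    set δ : ℝ := min (ε / 2) (dist x₀ x₁ / 3) with hδdef
    have hδ : 0 < δ := lt_min (by linarith) (by linarith)
    have mkball : ∀ x : X, x ∈ U ∩ C →
        ∃ (y : X) (r : ℝ), 0 < r ∧ y ∈ C ∧ Metric.ball y r ⊆ U ∧
          closure (Metric.ball y r) ⊆ O jj ∧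
          closure (Metric.ball y r) ⊆ Metric.ball x δ ∧
          EMetric.diam (Metric.ball y r) ≤ ENNReal.ofReal ε := by
      intro x hx
      have hU' : IsOpen (U ∩ Metric.ball x δ) := hU.inter Metric.isOpen_ball
      have hU'ne : ((U ∩ Metric.ball x δ) ∩ C).Nonempty :=
        ⟨x, ⟨hx.1, Metric.mem_ball_self hδ⟩, hx.2⟩
      obtain ⟨y, ⟨hyU', hyO⟩, hyC⟩ := hstar _ hU' hU'ne jj
      have hopen : IsOpen ((U ∩ Metric.ball x δ) ∩ O jj) := hU'.inter (hO jj)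
      obtain ⟨ρ, hρ, hball⟩ := Metric.isOpen_iff.1 hopen y ⟨hyU', hyO⟩
      refine ⟨y, min (ρ / 2) (ε / 2), lt_min (by linarith) (by linarith), hyC, ?_, ?_, ?_, ?_⟩
      · intro v hv
        have : v ∈ Metric.ball y ρ :=
          Metric.ball_subset_ball (le_trans (min_le_left _ _) (by linarith)) hv
        exact ((hball this).1).1
      · intro v hv
        have h1 : v ∈ Metric.closedBall y (min (ρ / 2) (ε / 2)) :=
          Metric.closure_ball_subset_closedBall hv
        have h2 : v ∈ Metric.ball y ρ :=
          Metric.closedBall_subset_ball (lt_of_le_of_lt (min_le_left _ _) (by linarith)) h1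
        exact (hball h2).2
      · intro v hv
        have h1 : v ∈ Metric.closedBall y (min (ρ / 2) (ε / 2)) :=
          Metric.closure_ball_subset_closedBall hv
        have h2 : v ∈ Metric.ball y ρ :=
          Metric.closedBall_subset_ball (lt_of_le_of_lt (min_le_left _ _) (by linarith)) h1
        exact ((hball h2).1).2
      · have hbd : EMetric.diam (Metric.ball y (min (ρ / 2) (ε / 2)))
            ≤ 2 * ENNReal.ofReal (min (ρ / 2) (ε / 2)) := by
          rw [← Metric.emetric_ball]; exact EMetric.diam_ball
        refine le_trans hbd ?_
        rw [show (2 : ℝ≥0∞) = ENNReal.ofReal 2 by simp,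
          ← ENNReal.ofReal_mul (by norm_num)]
        refine ENNReal.ofReal_le_ofReal ?_
        have := min_le_right (ρ / 2) (ε / 2)
        linarith
    obtain ⟨y₀, r₀, hr₀, hy₀C, hy₀U, hy₀O, hy₀b, hy₀d⟩ := mkball x₀ hx₀
    obtain ⟨y₁, r₁, hr₁, hy₁C, hy₁U, hy₁O, hy₁b, hy₁d⟩ := mkball x₁ hx₁
    refine ⟨Metric.ball y₀ r₀, Metric.ball y₁ r₁,
      ⟨Metric.isOpen_ball, ⟨y₀, Metric.mem_ball_self hr₀, hy₀C⟩, hy₀U, hy₀O, hy₀d⟩,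
      ⟨Metric.isOpen_ball, ⟨y₁, Metric.mem_ball_self hr₁, hy₁C⟩, hy₁U, hy₁O, hy₁d⟩, ?_⟩
    rw [Set.disjoint_left]
    intro v hv₀ hv₁
    have d₀ : dist v x₀ < δ := hy₀b hv₀
    have d₁ : dist v x₁ < δ := hy₁b hv₁
    have htri : dist x₀ x₁ ≤ dist x₀ v + dist v x₁ := dist_triangle _ _ _
    rw [dist_comm x₀ v] at htri
    have : δ ≤ dist x₀ x₁ / 3 := min_le_right _ _
    linarith
  obtain ⟨T, hTnil, hTne, hsub, havoid, hdiamT, hdisjT⟩ := aux_tree C hCne O step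
  set D : List Bool → Set X := fun l => closure (T l ∩ C) with hD
  have hDne : ∀ l, (D l).Nonempty := fun l => (hTne l).mono subset_closure
  have hanti : ClosureAntitone D := by
    refine Antitone.closureAntitone ?_ fun l => isClosed_closure
    intro l a
    exact closure_mono (inter_subset_inter_left _ (hsub l a))
  have hDsubT : ∀ l, D l ⊆ closure (T l) :=
    fun l => closure_mono inter_subset_left
  have hdisj : CantorScheme.Disjoint D := by
    rintro l (a | a) (b | b) hab
    · simp at hab
    · exact _root_.Disjoint.mono (hDsubT _) (hDsubT _) (hdisjT l)
    · exact _root_.Disjoint.mono (hDsubT _) (hDsubT _) (hdisjT l).symm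
    · simp at hab
  have hdiam : VanishingDiam D := by
    intro x
    refine tendsto_of_tendsto_of_tendsto_of_le_of_le' tendsto_const_nhds
      (g := fun _ => (0 : ℝ≥0∞)) (h := fun n => ENNReal.ofReal ((1 / 2) ^ n)) ?_ ?_ ?_
    · have h' : Tendsto (fun n : ℕ => ((1 : ℝ) / 2) ^ n) atTop (𝓝 0) :=
        tendsto_pow_atTop_nhds_zero_of_lt_one (by norm_num) (by norm_num)
      have := ENNReal.tendsto_ofReal h'
      simpa using this
    · filter_upwards with n using zero_le
    · rw [eventually_atTop]
      refine ⟨1, fun m hm => ?_⟩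
      rcases Nat.exists_eq_succ_of_ne_zero (Nat.one_le_iff_ne_zero.1 hm) with ⟨n, rfl⟩
      rw [res_succ]
      have e1 : EMetric.diam (D (x n :: res x n)) ≤ EMetric.diam (T (x n :: res x n)) := by
        rw [hD]; show Metric.ediam (closure _) ≤ Metric.ediam _; rw [Metric.ediam_closure]
        exact EMetric.diam_mono inter_subset_left
      refine le_trans (le_trans e1 (hdiamT _ _)) ?_
      rw [res_length]
  have hdom : ∀ x : ℕ → Bool, x ∈ (inducedMap D).1 := by
    have := hanti.map_of_vanishingDiam hdiam hDne
    rw [this]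
    exact fun x => mem_univ x
  refine ⟨fun x => (inducedMap D).2 ⟨x, hdom x⟩, ?_, ?_, ?_, ?_⟩
  · exact hdiam.map_continuous.comp (Continuous.subtype_mk continuous_id _)
  · intro x y hxy
    simpa only [← Subtype.val_inj] using hdisj.map_injective hxy
  · rintro w ⟨x, rfl⟩
    have hm := map_mem ⟨x, hdom x⟩ 0
    have hD0 : D (res x 0) ⊆ C := by
      rw [res_zero, hD]
      exact hCcl.closure_subset_iff.2 inter_subset_right
    exact hD0 hm
  · intro j
    rintro w ⟨x, rfl⟩
    have hm := map_mem ⟨x, hdom x⟩ (j + 1)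
    rw [res_succ] at hm
    have h2 : D (x j :: res x j) ⊆ O (res x j).length :=
      (hDsubT _).trans (havoid _ _)
    rw [res_length] at h2
    exact h2 hm

end S0Aux
namespace S0Aux

lemma getD_ofFn {k : ℕ} (g : Fin k → Bool) (i : ℕ) (h : i < k) :
    (List.ofFn g).getD i false = g ⟨i, h⟩ := by
  rw [List.getD_eq_getElem _ _ (by simpa using h), List.getElem_ofFn]

end S0Aux

theorem stmt0 {X : Type*} [TopologicalSpace X] [PolishSpace X]
    (hX : Perfect (Set.univ : Set X)) (A : Set X)
    (h : ∀ K : ℕ → Set X, (∀ n, IsCantorSet (K n)) → Pairwise (Function.onFun Disjoint K) →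
      ∃ F : ℕ → Set X, (∀ n, IsClosed (F n)) ∧ A ⊆ ⋃ n, F n ∧ ∀ m n, ¬ K m ⊆ F n) :
    ∀ P : Set X, PerfectSet P → ∃ K : Set X, K ⊆ P ∧ IsCantorSet K ∧ K ∩ A = ∅ := by
  classical
  intro P hP
  obtain ⟨hPperf, hPne⟩ := hP
  letI := TopologicalSpace.upgradeIsCompletelyMetrizable X
  obtain ⟨f, hfP, hfc, hfi⟩ := hPperf.exists_nat_bool_injection hPne
  set C : Set X := Set.range f with hCdef
  have hCcl : IsClosed C := (isCompact_range hfc).isClosed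
  have hCne : C.Nonempty := Set.range_nonempty f
  have basis := PiNat.isTopologicalBasis_cylinders (fun _ : ℕ => Bool)
  -- every open set meeting C contains two points of C
  have htwo : ∀ U : Set X, IsOpen U → (U ∩ C).Nonempty →
      ∃ x₀ x₁ : X, x₀ ∈ U ∩ C ∧ x₁ ∈ U ∩ C ∧ x₀ ≠ x₁ := by
    intro U hU hUne
    obtain ⟨x, hxU, hxC⟩ := hUne
    rw [hCdef] at hxC
    obtain ⟨z, rfl⟩ := hxC
    have hz : z ∈ f ⁻¹' U := hxU
    obtain ⟨v, ⟨z', k, rfl⟩, hzv, hvU⟩ :=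
      basis.exists_subset_of_mem_open hz (hU.preimage hfc)
    set w : ℕ → Bool := Function.update z k (!(z k)) with hwdef
    have hwv : w ∈ PiNat.cylinder z' k := by
      refine PiNat.mem_cylinder_iff.2 fun i hi => ?_
      rw [hwdef, Function.update_of_ne hi.ne]
      exact PiNat.mem_cylinder_iff.1 hzv i hi
    have hwz : w ≠ z := by
      intro hcontr
      have h1 : (!(z k)) = z k := by
        have := congrFun hcontr k
        rwa [hwdef, Function.update_self] at this
      simp at h1
    exact ⟨f w, f z, ⟨hvU hwv, Set.mem_range_self w⟩, ⟨hxU, Set.mem_range_self z⟩,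
      fun hfeq => hwz (hfi hfeq)⟩
  obtain ⟨u, hu⟩ := exists_surjective_nat (List Bool × List Bool)
  set φ : ℕ → (ℕ → Bool) → X := fun n y =>
    f (S0Aux.interleave (S0Aux.withPrefix (u n).1 y) (S0Aux.tag (u n).2 n)) with hφdef
  have hφc : ∀ n, Continuous (φ n) := by
    intro n
    rw [hφdef]
    refine hfc.comp ?_
    refine continuous_pi fun i => ?_
    unfold S0Aux.interleave S0Aux.withPrefix
    exact Continuous.if_const _
      (Continuous.if_const _ continuous_const (continuous_apply _)) continuous_const
  have hφi : ∀ n, Function.Injective (φ n) := by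
    intro n y y' he
    simp only [hφdef] at he
    have h2 := hfi he
    funext i
    have h3 := congrFun h2 (2 * ((u n).1.length + i))
    rwa [S0Aux.interleave_even, S0Aux.interleave_even, S0Aux.withPrefix_add,
      S0Aux.withPrefix_add] at h3
  set K : ℕ → Set X := fun n => Set.range (φ n) with hKdef
  have hKcantor : ∀ n, IsCantorSet (K n) := by
    intro n
    exact ⟨Topology.IsEmbedding.toHomeomorph ((hφc n).isClosedEmbedding (hφi n)).toIsEmbedding⟩
  have hKdisj : Pairwise (Disjoint on K) := by
    intro n m hnm
    simp only [Function.onFun]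
    rw [Set.disjoint_left]
    rintro x hxn hxm
    rw [hKdef] at hxn hxm
    obtain ⟨y, hy⟩ := hxn
    obtain ⟨y', hy'⟩ := hxm
    have he : φ n y = φ m y' := hy.trans hy'.symm
    simp only [hφdef] at he
    have h2 := hfi he
    have h3 : S0Aux.tag (u n).2 n = S0Aux.tag (u m).2 m := by
      funext i
      have h4 := congrFun h2 (2 * i + 1)
      rwa [S0Aux.interleave_odd, S0Aux.interleave_odd] at h4
    exact hnm (S0Aux.tag_inj h3)
  obtain ⟨F, hFcl, hAF, hKF⟩ := h K hKcantor hKdisj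
  -- the complement of each F j is "dense relative to C"
  have hstar : ∀ U : Set X, IsOpen U → (U ∩ C).Nonempty →
      ∀ j, ((U ∩ (F j)ᶜ) ∩ C).Nonempty := by
    intro U hU hUne j
    obtain ⟨x, hxU, hxC⟩ := hUne
    rw [hCdef] at hxC
    obtain ⟨z, rfl⟩ := hxC
    have hz : z ∈ f ⁻¹' U := hxU
    obtain ⟨v, ⟨z', k, rfl⟩, hzv, hvU⟩ :=
      basis.exists_subset_of_mem_open hz (hU.preimage hfc)
    have hcyl : PiNat.cylinder z k = PiNat.cylinder z' k :=
      PiNat.mem_cylinder_iff_eq.1 hzv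
    set σ : List Bool := List.ofFn (fun i : Fin k => z (2 * (i : ℕ))) with hσdef
    set τ : List Bool := List.ofFn (fun i : Fin k => z (2 * (i : ℕ) + 1)) with hτdef
    obtain ⟨n, hn⟩ := hu (σ, τ)
    have hσ : (u n).1 = σ := by rw [hn]
    have hτ : (u n).2 = τ := by rw [hn]
    have hσlen : (u n).1.length = k := by rw [hσ, hσdef]; simp
    have hτlen : (u n).2.length = k := by rw [hτ, hτdef]; simp
    obtain ⟨x', hx'K, hx'F⟩ := Set.not_subset.1 (hKF n j)
    rw [hKdef] at hx'K
    obtain ⟨y, rfl⟩ := hx'K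
    set w : ℕ → Bool :=
      S0Aux.interleave (S0Aux.withPrefix (u n).1 y) (S0Aux.tag (u n).2 n) with hwdef
    have hwcyl : w ∈ PiNat.cylinder z k := by
      refine PiNat.mem_cylinder_iff.2 fun i hi => ?_
      rcases Nat.even_or_odd i with ⟨i', rfl⟩ | ⟨i', rfl⟩
      · have hii : i' + i' = 2 * i' := by omega
        rw [hii] at hi ⊢
        have hi' : i' < k := by omega
        rw [hwdef, S0Aux.interleave_even, S0Aux.withPrefix_lt _ _ _ (by omega), hσ, hσdef,
          S0Aux.getD_ofFn _ _ hi']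
      · have hi' : i' < k := by omega
        rw [hwdef, S0Aux.interleave_odd, S0Aux.tag_lt _ _ _ (by omega), hτ, hτdef,
          S0Aux.getD_ofFn _ _ hi']
    have hwU : f w ∈ U := hvU (hcyl ▸ hwcyl)
    have hφw : φ n y = f w := by rw [hφdef, hwdef]
    refine ⟨f w, ⟨hwU, ?_⟩, Set.mem_range_self w⟩
    rw [← hφw]
    exact hx'F
  obtain ⟨g, hgc, hgi, hgC, hgO⟩ := S0Aux.aux_scheme C hCcl hCne (fun j => (F j)ᶜ)
    (fun j => (hFcl j).isOpen_compl) hstar htwo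
  refine ⟨Set.range g, ?_, ?_, ?_⟩
  · refine hgC.trans ?_
    rw [hCdef]
    exact hfP
  · exact ⟨Topology.IsEmbedding.toHomeomorph (hgc.isClosedEmbedding hgi).toIsEmbedding⟩
  · rw [Set.eq_empty_iff_forall_notMem]
    rintro x ⟨hxK, hxA⟩
    obtain ⟨j, hj⟩ := Set.mem_iUnion.1 (hAF hxA)
    exact (hgO j hxK) hj
end

section
/- For every sequence {P_n : n ∈ ℕ} of perfect subsets of a perfect Polish space X, there exists a sequence {K_n : n ∈ ℕ} of pairwise disjoint Cantor sets with K_n ⊆ P_n for each n. -/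
open Set

/-- `F` is meager relative to the subspace `P`. -/
def MeagerIn {X : Type*} [TopologicalSpace X] (F P : Set X) : Prop :=
  IsMeagre ((↑) ⁻¹' F : Set P)

/-- `A` is countably perfectly meager in `X`. -/
def CPM {X : Type*} [TopologicalSpace X] (A : Set X) : Prop :=
  ∀ P : ℕ → Set X, (∀ n, PerfectSet (P n)) →
    ∃ F : Set X, IsFsigma F ∧ A ⊆ F ∧ ∀ n, MeagerIn F (P n)

/-! ### Auxiliary material -/

open Function

open Classical in
lemma CPMaux.uncountable_cantorSpace : Uncountable (ℕ → Bool) := by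
  rw [← not_countable_iff]
  intro h
  obtain ⟨f, hf⟩ := exists_injective_nat (ℕ → Bool)
  refine Function.cantor_injective (fun s : Set ℕ => f (fun n => decide (n ∈ s))) ?_
  refine hf.comp ?_
  intro s t hst
  ext n
  simpa using congrFun hst n

namespace CPMaux

/-- Interleaving map: even coordinates from `t`, odd coordinates from `x`. -/
def interleave (t x : ℕ → Bool) : ℕ → Bool := fun n => if n % 2 = 0 then t (n / 2) else x (n / 2)

lemma interleave_even (t x : ℕ → Bool) (k : ℕ) : interleave t x (2 * k) = t k := by
  simp [interleave, Nat.mul_div_cancel_left _ (by norm_num : (0:ℕ) < 2), Nat.mul_mod_right]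

lemma interleave_odd (t x : ℕ → Bool) (k : ℕ) : interleave t x (2 * k + 1) = x k := by
  have h1 : (2 * k + 1) % 2 = 1 := by omega
  have h2 : (2 * k + 1) / 2 = k := by omega
  simp [interleave, h1, h2]

lemma continuous_interleave (t : ℕ → Bool) : Continuous (interleave t) := by
  refine continuous_pi fun n => ?_
  by_cases h : n % 2 = 0
  · simpa [interleave, h] using (continuous_const : Continuous fun _ : ℕ → Bool => t (n / 2))
  · simpa [interleave, h] using continuous_apply (n / 2)

lemma interleave_injective (t : ℕ → Bool) : Injective (interleave t) := by
  intro x y hxy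
  ext k
  have := congrFun hxy (2 * k + 1)
  rwa [interleave_odd, interleave_odd] at this

lemma interleave_ranges_disjoint {t t' : ℕ → Bool} (h : t ≠ t') :
    Disjoint (range (interleave t)) (range (interleave t')) := by
  rw [Set.disjoint_left]
  rintro z ⟨x, rfl⟩ ⟨y, hy⟩
  apply h
  ext k
  have := congrFun hy (2 * k)
  rw [interleave_even, interleave_even] at this
  exact this.symm

lemma isCantorSet_range {Y : Type*} [TopologicalSpace Y] [T2Space Y] {f : (ℕ → Bool) → Y}
    (hc : Continuous f) (hi : Injective f) : IsCantorSet (range f) := by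
  refine ⟨Continuous.homeoOfEquivCompactToT2 (f := Equiv.ofInjective f hi) ?_⟩
  exact Continuous.subtype_mk hc _

variable {X : Type*} [MetricSpace X] [CompleteSpace X] [SecondCountableTopology X]

/-- In every nonempty perfect set `Q` there is a Cantor set whose trace on each of the
subspaces `P m` has empty interior. -/
lemma exists_cantor (P : ℕ → Set X) (Q : Set X) (hQ : Perfect Q) (hne : Q.Nonempty) :
    ∃ K : Set X, IsCantorSet K ∧ K ⊆ Q ∧ IsClosed K ∧
      ∀ m, interior ((↑) ⁻¹' K : Set (P m)) = ∅ := by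
  obtain ⟨f, hfQ, hfc, hfi⟩ := hQ.exists_nat_bool_injection hne
  set h : (ℕ → Bool) → (ℕ → Bool) → X := fun t => f ∘ interleave t with hh
  have hc : ∀ t, Continuous (h t) := fun t => hfc.comp (continuous_interleave t)
  have hi : ∀ t, Injective (h t) := fun t => hfi.comp (interleave_injective t)
  have hd : ∀ t t', t ≠ t' → Disjoint (range (h t)) (range (h t')) := by
    intro t t' htt'
    rw [Set.disjoint_left]
    rintro z ⟨x, rfl⟩ ⟨y, hy⟩
    have : interleave t x = interleave t' y := hfi hy.symm
    exact (Set.disjoint_left.1 (interleave_ranges_disjoint htt')) ⟨x, rfl⟩ ⟨y, this.symm⟩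
  -- the set of "bad" parameters for a fixed `m` is countable
  have key : ∀ m, {t : ℕ → Bool |
      (interior ((↑) ⁻¹' (range (h t)) : Set (P m))).Nonempty}.Countable := by
    intro m
    obtain ⟨D, hDc, hDd⟩ := TopologicalSpace.exists_countable_dense (↥(P m))
    have hsub : {t : ℕ → Bool | (interior ((↑) ⁻¹' (range (h t)) : Set (P m))).Nonempty} ⊆
        ⋃ d ∈ D, {t | (d : X) ∈ range (h t)} := by
      intro t ht
      obtain ⟨d, hd1, hd2⟩ := hDd.inter_open_nonempty _ isOpen_interior ht
      have hmem : d ∈ ((↑) ⁻¹' (range (h t)) : Set (P m)) := interior_subset hd1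
      exact Set.mem_biUnion hd2 (Set.mem_preimage.1 hmem)
    refine Set.Countable.mono hsub (Set.Countable.biUnion hDc fun d _ => ?_)
    refine Set.Subsingleton.countable ?_
    intro t ht t' ht'
    by_contra hne'
    exact (Set.disjoint_left.1 (hd t t' hne')) ht ht'
  have : Uncountable (ℕ → Bool) := uncountable_cantorSpace
  have hbig : ¬ (Set.univ : Set (ℕ → Bool)).Countable := Set.not_countable_univ
  have : ∃ t : ℕ → Bool, ∀ m, ¬ (interior ((↑) ⁻¹' (range (h t)) : Set (P m))).Nonempty := by
    by_contra hcon
    push_neg at hcon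
    apply hbig
    refine Set.Countable.mono ?_ (Set.countable_iUnion key)
    intro t _
    obtain ⟨m, hm⟩ := hcon t
    exact Set.mem_iUnion.2 ⟨m, hm⟩
  obtain ⟨t, ht⟩ := this
  refine ⟨range (h t), isCantorSet_range (hc t) (hi t), ?_, ?_, ?_⟩
  · rintro z ⟨x, rfl⟩; exact hfQ ⟨_, rfl⟩
  · exact (isCompact_range (hc t)).isClosed
  · intro m
    rw [← Set.not_nonempty_iff_eq_empty]
    exact ht m

lemma interior_union_empty {Y : Type*} [TopologicalSpace Y] {A B : Set Y} (hA : IsClosed A)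
    (hAi : interior A = ∅) (hBi : interior B = ∅) : interior (A ∪ B) = ∅ := by
  have h1 : interior (A ∪ B) \ A ⊆ interior B := by
    refine interior_maximal ?_ (isOpen_interior.sdiff hA)
    rintro x ⟨hx, hxA⟩
    rcases interior_subset hx with h | h
    · exact absurd h hxA
    · exact h
  rw [hBi] at h1
  have h1' : interior (A ∪ B) ⊆ A := by
    intro x hx
    by_contra hxA
    exact absurd (h1 ⟨hx, hxA⟩) (Set.notMem_empty x)
  have h2 : interior (A ∪ B) ⊆ interior A := interior_maximal h1' isOpen_interior
  rw [hAi] at h2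
  exact Set.eq_empty_iff_forall_notMem.2 fun x hx => h2 hx

lemma interior_biUnion_empty {Y : Type*} [TopologicalSpace Y] (s : Finset ℕ) (A : ℕ → Set Y)
    (hA : ∀ i ∈ s, IsClosed (A i) ∧ interior (A i) = ∅) :
    interior (⋃ i ∈ s, A i) = ∅ := by
  classical
  induction s using Finset.induction_on with
  | empty => simp
  | @insert a s ha ih =>
    rw [Finset.set_biUnion_insert]
    exact interior_union_empty (hA a (Finset.mem_insert_self a s)).1
      (hA a (Finset.mem_insert_self a s)).2
      (ih fun i hi => hA i (Finset.mem_insert_of_mem hi))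

/-- The inductive step. -/
lemma step (P : ℕ → Set X) (hP : ∀ n, PerfectSet (P n)) (n : ℕ) (Kprev : ℕ → Set X)
    (hprev : ∀ i, i < n → IsClosed (Kprev i) ∧
      ∀ m, interior ((↑) ⁻¹' (Kprev i) : Set (P m)) = ∅) :
    ∃ K : Set X, IsCantorSet K ∧ K ⊆ P n ∧ IsClosed K ∧
      (∀ m, interior ((↑) ⁻¹' K : Set (P m)) = ∅) ∧ ∀ i, i < n → Disjoint K (Kprev i) := by
  set C : Set X := ⋃ i ∈ Finset.range n, Kprev i with hC
  have hCc : IsClosed C :=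
    isClosed_biUnion_finset fun i hi => (hprev i (Finset.mem_range.1 hi)).1
  -- find a point of `P n` outside `C`
  have hx : ∃ x ∈ P n, x ∉ C := by
    by_contra hcon
    push_neg at hcon
    have hcov : ((↑) ⁻¹' C : Set (P n)) = Set.univ := by
      ext ⟨x, hxP⟩
      simp only [Set.mem_preimage, Set.mem_univ, iff_true]
      exact hcon x hxP
    have hint : interior ((↑) ⁻¹' C : Set (P n)) = ∅ := by
      have : ((↑) ⁻¹' C : Set (P n)) = ⋃ i ∈ Finset.range n, ((↑) ⁻¹' (Kprev i) : Set (P n)) := by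
        simp [hC]
      rw [this]
      refine interior_biUnion_empty _ _ fun i hi => ?_
      exact ⟨(hprev i (Finset.mem_range.1 hi)).1.preimage continuous_subtype_val,
        (hprev i (Finset.mem_range.1 hi)).2 n⟩
    rw [hcov, interior_univ] at hint
    obtain ⟨x, hxP⟩ := (hP n).2
    exact Set.eq_empty_iff_forall_notMem.1 hint ⟨x, hxP⟩ (Set.mem_univ _)
  obtain ⟨x, hxP, hxC⟩ := hx
  obtain ⟨ε, hε, hball⟩ := Metric.isOpen_iff.1 hCc.isOpen_compl x hxC
  set U : Set X := Metric.ball x (ε / 2) with hU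
  have hclU : closure U ⊆ Cᶜ := by
    refine Subset.trans ?_ hball
    refine Subset.trans Metric.closure_ball_subset_closedBall ?_
    intro y hy
    rw [Metric.mem_closedBall] at hy
    rw [Metric.mem_ball]
    linarith
  have hQ := (hP n).1.closure_nhds_inter (U := U) x hxP
    (Metric.mem_ball_self (by linarith : (0:ℝ) < ε / 2)) Metric.isOpen_ball
  set Q : Set X := closure (U ∩ P n) with hQdef
  have hQP : Q ⊆ P n := closure_minimal Set.inter_subset_right (hP n).1.closed
  have hQU : Q ⊆ closure U := closure_mono Set.inter_subset_left
  obtain ⟨K, hK1, hK2, hK3, hK4⟩ := exists_cantor P Q hQ.1 hQ.2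
  refine ⟨K, hK1, hK2.trans hQP, hK3, hK4, ?_⟩
  intro i hi
  rw [Set.disjoint_left]
  intro z hzK hzi
  have hzC : z ∈ C := Set.mem_biUnion (Finset.mem_range.2 hi) hzi
  exact hclU (hQU (hK2 hzK)) hzC

/-- Choice of a sequence where each term may depend on the previous ones. -/
noncomputable def seqChoice {α : Type*} (Φ : ℕ → (ℕ → α) → α → Prop) (d : α)
    (hd : ∀ n f, ∃ a, Φ n f a) : ℕ → α := fun n =>
  (hd n (fun i => if h : i < n then seqChoice Φ d hd i else d)).choose
termination_by n => n
decreasing_by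
  all_goals omega

lemma seqChoice_spec {α : Type*} (Φ : ℕ → (ℕ → α) → α → Prop) (d : α)
    (hd : ∀ n f, ∃ a, Φ n f a) (n : ℕ) :
    Φ n (fun i => if h : i < n then seqChoice Φ d hd i else d) (seqChoice Φ d hd n) := by
  have heq : seqChoice Φ d hd n =
      (hd n (fun i => if h : i < n then seqChoice Φ d hd i else d)).choose := by
    rw [seqChoice]
  rw [heq]
  exact (hd n _).choose_spec

end CPMaux

theorem stmt1 {X : Type*} [TopologicalSpace X] [PolishSpace X]
    (hX : Perfect (Set.univ : Set X)) (P : ℕ → Set X) (hP : ∀ n, PerfectSet (P n)) :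
    ∃ K : ℕ → Set X, Pairwise (Function.onFun Disjoint K) ∧
      ∀ n, IsCantorSet (K n) ∧ K n ⊆ P n := by
  letI := TopologicalSpace.upgradeIsCompletelyMetrizable X
  set Φ : ℕ → (ℕ → Set X) → Set X → Prop := fun n Kp K =>
    IsCantorSet K ∧ K ⊆ P n ∧ IsClosed K ∧
      (∀ m, interior ((↑) ⁻¹' K : Set (P m)) = ∅) ∧
      ((∀ i, i < n → IsClosed (Kp i) ∧ ∀ m, interior ((↑) ⁻¹' (Kp i) : Set (P m)) = ∅) →
        ∀ i, i < n → Disjoint K (Kp i)) with hΦ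
  have hd : ∀ n f, ∃ K, Φ n f K := by
    intro n f
    by_cases hf : ∀ i, i < n → IsClosed (f i) ∧ ∀ m, interior ((↑) ⁻¹' (f i) : Set (P m)) = ∅
    · obtain ⟨K, h1, h2, h3, h4, h5⟩ := CPMaux.step P hP n f hf
      exact ⟨K, h1, h2, h3, h4, fun _ => h5⟩
    · obtain ⟨K, h1, h2, h3, h4, _⟩ := CPMaux.step P hP n (fun _ => ∅)
        (fun i _ => ⟨isClosed_empty, fun m => by simp⟩)
      exact ⟨K, h1, h2, h3, h4, fun h' => absurd h' hf⟩
  set K : ℕ → Set X := CPMaux.seqChoice Φ ∅ hd with hK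
  have hspec := CPMaux.seqChoice_spec Φ ∅ hd
  have hbase : ∀ n, IsClosed (K n) ∧ ∀ m, interior ((↑) ⁻¹' (K n) : Set (P m)) = ∅ :=
    fun n => ⟨(hspec n).2.2.1, (hspec n).2.2.2.1⟩
  have hdisj : ∀ i n, i < n → Disjoint (K n) (K i) := by
    intro i n hin
    have h := (hspec n).2.2.2.2 (fun j hj => by
      simp only [dif_pos hj]; exact hbase j) i hin
    simp only [dif_pos hin] at h
    exact h
  refine ⟨K, ?_, fun n => ⟨(hspec n).1, (hspec n).2.1⟩⟩
  intro a b hab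
  rcases lt_or_gt_of_ne hab with h | h
  · exact (hdisj a b h).symm
  · exact hdisj b a h
end

section
/- A subset A of a perfect Polish space X is countably perfectly meager in X if and only if for every sequence {K_n : n ∈ ℕ} of Cantor sets in X there exists an F_σ-set F in X such that A ⊆ F and K_m ⊄ F for every m. -/
open Set

open Topology Filter

/-- In Cantor space, no point is isolated. -/
lemma cantor_not_isolated (x : ℕ → Bool) : Filter.NeBot (𝓝[≠] x) := by
  have htends : Tendsto (fun n => Function.update x n (!x n)) atTop (𝓝 x) := by
    rw [tendsto_pi_nhds]
    intro k
    refine tendsto_const_nhds.congr' ?_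
    filter_upwards [eventually_gt_atTop k] with n hn
    exact (Function.update_of_ne (by omega) _ _).symm
  have hne : ∀ n, Function.update x n (!x n) ≠ x := by
    intro n hEq
    have : Function.update x n (!x n) n = x n := by rw [hEq]
    simp at this
  have : Tendsto (fun n => Function.update x n (!x n)) atTop (𝓝[≠] x) :=
    tendsto_nhdsWithin_of_tendsto_nhds_of_eventually_within _ htends
      (Eventually.of_forall fun n => hne n)
  exact this.neBot

/-- A Cantor set in a T2 space is a nonempty perfect set. -/
lemma IsCantorSet.perfectSet {X : Type*} [TopologicalSpace X] [T2Space X] {K : Set X}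
    (h : IsCantorSet K) : PerfectSet K := by
  obtain ⟨e⟩ := h
  have hne : K.Nonempty := ⟨(e (fun _ => false)).1, (e (fun _ => false)).2⟩
  haveI : CompactSpace K := e.compactSpace
  have hKcompact : IsCompact K := isCompact_iff_compactSpace.mpr ‹_›
  refine ⟨⟨hKcompact.isClosed, ?_⟩, hne⟩
  rw [preperfect_iff_nhds]
  intro x hx U hU
  set x' : K := ⟨x, hx⟩
  have hU' : ((↑) ⁻¹' U : Set K) ∈ 𝓝 x' :=
    continuous_subtype_val.continuousAt.preimage_mem_nhds hU
  set z := e.symm x' with hz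
  have hV : e ⁻¹' ((↑) ⁻¹' U : Set K) ∈ 𝓝 z := by
    refine e.continuous.continuousAt.preimage_mem_nhds ?_
    rwa [hz, e.apply_symm_apply]
  haveI := cantor_not_isolated z
  have hmem : e ⁻¹' ((↑) ⁻¹' U : Set K) ∈ 𝓝[≠] z := nhdsWithin_le_nhds hV
  obtain ⟨w, hwU, hwz⟩ := Filter.nonempty_of_mem (Filter.inter_mem hmem self_mem_nhdsWithin)
  refine ⟨(e w : X), ⟨hwU, (e w).2⟩, ?_⟩
  intro hEq
  have heq' : e w = x' := Subtype.ext hEq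
  simp only [mem_compl_iff, mem_singleton_iff] at hwz
  exact hwz (by rw [hz, ← heq', e.symm_apply_apply])

/-- Any nonempty perfect set in a complete metric space contains a Cantor set. -/
lemma exists_cantorSet_subset {X : Type*} [MetricSpace X] [CompleteSpace X] {C : Set X}
    (hC : Perfect C) (hne : C.Nonempty) : ∃ K : Set X, IsCantorSet K ∧ K ⊆ C := by
  obtain ⟨f, hfC, hfc, hfi⟩ := hC.exists_nat_bool_injection hne
  have hemb := hfc.isClosedEmbedding hfi
  exact ⟨Set.range f, ⟨hemb.toIsEmbedding.toHomeomorph⟩, hfC⟩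

/-- A closed set with empty interior is meager. -/
lemma isMeagre_of_isClosed_interior_empty {X : Type*} [TopologicalSpace X] {s : Set X}
    (hs : IsClosed s) (hint : interior s = ∅) : IsMeagre s :=
  residual_of_dense_open hs.isOpen_compl (interior_eq_empty_iff_dense_compl.mp hint)

theorem stmt2 {X : Type*} [TopologicalSpace X] [PolishSpace X]
    (hX : Perfect (Set.univ : Set X)) (A : Set X) :
    CPM A ↔
      ∀ K : ℕ → Set X, (∀ n, IsCantorSet (K n)) →
        ∃ F : Set X, IsFsigma F ∧ A ⊆ F ∧ ∀ m, ¬ K m ⊆ F := by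
  constructor
  · -- CPM → Cantor version
    intro hA K hK
    obtain ⟨F, hF, hAF, hmeager⟩ := hA K (fun n => (hK n).perfectSet)
    refine ⟨F, hF, hAF, fun m hsub => ?_⟩
    have hKm := (hK m).perfectSet
    haveI : PolishSpace (K m) := hKm.1.closed.polishSpace
    letI := TopologicalSpace.upgradeIsCompletelyMetrizable (K m)
    have huniv : ((↑) ⁻¹' F : Set (K m)) = univ := eq_univ_of_forall fun x => hsub x.2
    have hmg := hmeager m
    rw [MeagerIn, huniv, IsMeagre, compl_univ] at hmg
    have hd : Dense (∅ : Set (K m)) := dense_of_mem_residual hmg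
    haveI : Nonempty (K m) := ⟨⟨hKm.2.choose, hKm.2.choose_spec⟩⟩
    exact absurd hd.nonempty Set.not_nonempty_empty
  · -- Cantor version → CPM
    intro h P hP
    letI := TopologicalSpace.upgradeIsCompletelyMetrizable X
    obtain ⟨K₀, hK₀, -⟩ := exists_cantorSet_subset (hP 0).1 (hP 0).2
    haveI hXne : Nonempty X := ⟨(hP 0).2.choose⟩
    obtain ⟨b, hbc, -, hbasis⟩ := TopologicalSpace.exists_countable_basis X
    have hbne : b.Nonempty := by
      obtain ⟨x⟩ := hXne
      have hx : x ∈ ⋃₀ b := by rw [hbasis.sUnion_eq]; trivial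
      obtain ⟨s, hs, -⟩ := hx
      exact ⟨s, hs⟩
    obtain ⟨u, hu⟩ := hbc.exists_eq_range hbne
    have key : ∀ n i, ∃ K : Set X,
        IsCantorSet K ∧ ((u i ∩ P n).Nonempty → K ⊆ closure (u i ∩ P n)) := by
      intro n i
      by_cases hne : (u i ∩ P n).Nonempty
      · have hui : IsOpen (u i) := hbasis.isOpen (by rw [hu]; exact mem_range_self i)
        have hperf : Perfect (closure (u i ∩ P n)) :=
          ((hP n).1.acc.open_inter hui).perfect_closure
        obtain ⟨K, hK, hKsub⟩ := exists_cantorSet_subset hperf (hne.mono subset_closure)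
        exact ⟨K, hK, fun _ => hKsub⟩
      · exact ⟨K₀, hK₀, fun hcon => absurd hcon hne⟩
    choose Kf hKf hKsub using key
    obtain ⟨F, hF, hAF, hnotsub⟩ :=
      h (fun m => Kf (Nat.unpair m).1 (Nat.unpair m).2) (fun m => hKf _ _)
    refine ⟨F, hF, hAF, fun n => ?_⟩
    obtain ⟨s, hscl, rfl⟩ := hF
    rw [MeagerIn, preimage_iUnion]
    apply isMeagre_iUnion
    intro k
    have hclosed : IsClosed ((↑) ⁻¹' s k : Set (P n)) :=
      (hscl k).preimage continuous_subtype_val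
    refine isMeagre_of_isClosed_interior_empty hclosed ?_
    by_contra hint
    obtain ⟨x, hx⟩ := nonempty_iff_ne_empty.mpr hint
    obtain ⟨V, hVopen, hVeq⟩ := isOpen_induced_iff.mp
      (isOpen_interior (s := ((↑) ⁻¹' s k : Set (P n))))
    have hxV : (x : X) ∈ V := by
      have : x ∈ (↑) ⁻¹' V := by rw [hVeq]; exact hx
      exact this
    obtain ⟨t, htb, hxt, htV⟩ := hbasis.exists_subset_of_mem_open hxV hVopen
    rw [hu] at htb
    obtain ⟨i, rfl⟩ := htb
    have hne : (u i ∩ P n).Nonempty := ⟨x, hxt, x.2⟩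
    have hsub : u i ∩ P n ⊆ s k := by
      rintro y ⟨hyu, hyP⟩
      have : (⟨y, hyP⟩ : P n) ∈ (↑) ⁻¹' V := htV hyu
      rw [hVeq] at this
      have h2 : (⟨y, hyP⟩ : P n) ∈ ((↑) ⁻¹' s k : Set (P n)) := interior_subset this
      exact h2
    have hclsub : closure (u i ∩ P n) ⊆ s k := (hscl k).closure_subset_iff.mpr hsub
    have := hnotsub (Nat.pair n i)
    apply this
    intro y hy
    have hy' : y ∈ Kf n i := by rwa [Nat.unpair_pair] at hy
    exact mem_iUnion.mpr ⟨k, hclsub (hKsub n i hne hy')⟩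
end

section
/- The collection PM_σ of countably perfectly meager subsets of a perfect Polish space X is a σ-ideal: it contains all singletons, is closed under taking subsets, and is closed under countable unions. -/
open Set

lemma my_singleton_meager {X : Type*} [TopologicalSpace X] [T1Space X]
    {P : Set X} (hP : Perfect P) (x : X) :
    IsMeagre ((↑) ⁻¹' ({x} : Set X) : Set P) := by
  by_cases hx : x ∈ P
  · have hpre : ((↑) ⁻¹' ({x} : Set X) : Set P) = {⟨x, hx⟩} := by
      ext y; simp [Subtype.ext_iff]
    rw [hpre]
    have hacc : AccPt x (Filter.principal P) := hP.acc x hx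
    have hnb : Filter.NeBot (nhdsWithin (⟨x, hx⟩ : P) {(⟨x, hx⟩ : P)}ᶜ) := by
      rw [← mem_closure_iff_nhdsWithin_neBot, closure_subtype]
      have himg : ((↑) '' ({(⟨x, hx⟩ : P)}ᶜ) : Set X) = P \ {x} := by
        ext z
        constructor
        · rintro ⟨⟨z', hz'⟩, hz2, rfl⟩
          refine ⟨hz', ?_⟩
          simpa [Subtype.ext_iff] using hz2
        · rintro ⟨hzP, hzx⟩
          exact ⟨⟨z, hzP⟩, by simpa [Subtype.ext_iff] using hzx, rfl⟩
      rw [himg]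
      rw [accPt_principal_iff_clusterPt] at hacc
      exact mem_closure_iff_clusterPt.mpr hacc
    have hdense : Dense ({(⟨x, hx⟩ : P)}ᶜ : Set P) := dense_compl_singleton _
    have : ({(⟨x, hx⟩ : P)} : Set P)ᶜ ∈ residual P :=
      residual_of_dense_open isOpen_compl_singleton hdense
    exact this
  · have hpre : ((↑) ⁻¹' ({x} : Set X) : Set P) = ∅ := by
      ext y; simp; rintro rfl; exact hx y.2
    rw [hpre]; exact IsMeagre.empty

theorem stmt5 {X : Type*} [TopologicalSpace X] [PolishSpace X]
    (hX : Perfect (Set.univ : Set X)) :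
    (∀ x : X, CPM {x}) ∧
    (∀ A B : Set X, A ⊆ B → CPM B → CPM A) ∧
    (∀ A : ℕ → Set X, (∀ n, CPM (A n)) → CPM (⋃ n, A n)) := by
  refine ⟨?_, ?_, ?_⟩
  · intro x P hP
    refine ⟨{x}, ⟨fun _ => {x}, fun _ => isClosed_singleton, by simp⟩, subset_rfl, fun n => ?_⟩
    exact my_singleton_meager (hP n).1 x
  · intro A B hAB hB P hP
    obtain ⟨F, hF, hBF, hm⟩ := hB P hP
    exact ⟨F, hF, hAB.trans hBF, hm⟩
  · intro A hA P hP
    choose F hFσ hAF hFm using fun n => hA n P hP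
    choose s hs hseq using hFσ
    refine ⟨⋃ n, F n, ⟨fun k => s k.unpair.1 k.unpair.2, fun k => hs _ _, ?_⟩,
      iUnion_mono hAF, fun m => ?_⟩
    · ext z
      simp only [mem_iUnion]
      constructor
      · rintro ⟨n, hz⟩
        rw [hseq n] at hz
        obtain ⟨k, hk⟩ := mem_iUnion.mp hz
        exact ⟨Nat.pair n k, by simpa [Nat.unpair_pair] using hk⟩
      · rintro ⟨k, hk⟩
        exact ⟨k.unpair.1, by rw [hseq]; exact mem_iUnion.mpr ⟨k.unpair.2, hk⟩⟩
    · have : ((↑) ⁻¹' (⋃ n, F n) : Set (P m)) = ⋃ n, ((↑) ⁻¹' (F n) : Set (P m)) := by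
        simp [preimage_iUnion]
      rw [MeagerIn, this]
      exact isMeagre_iUnion fun n => hFm n m
end

section
/- Every λ'-set in a perfect Polish space X is countably perfectly meager in X. -/
open Set

/-- `A` is a `λ'`-set in `X`: every countable `D ⊆ X` is a relative `Gδ`-set
in the subspace `A ∪ D`. -/
def IsLambdaPrimeSet {X : Type*} [TopologicalSpace X] (A : Set X) : Prop :=
  ∀ D : Set X, D.Countable → ∃ G : Set X, IsGδ G ∧ (A ∪ D) ∩ G = D

/-- A nowhere dense set is meagre. -/
lemma IsNowhereDense.isMeagre' {X : Type*} [TopologicalSpace X] {s : Set X}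
    (h : IsNowhereDense s) : IsMeagre s := by
  rw [isMeagre_iff_countable_union_isNowhereDense]
  exact ⟨{s}, by simpa using h, countable_singleton _, by simp⟩

/-- In a T1 space, a singleton of a non-isolated point of a perfect set is nowhere dense
in the subspace. -/
lemma singleton_isNowhereDense_of_perfect {X : Type*} [TopologicalSpace X] [T1Space X]
    {P : Set X} (hP : Perfect P) (x : ↥P) : IsNowhereDense ({x} : Set ↥P) := by
  rw [(isClosed_singleton).isNowhereDense_iff, eq_empty_iff_forall_notMem]
  intro y hy
  have hyx : y ∈ ({x} : Set ↥P) := interior_subset hy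
  rw [mem_singleton_iff] at hyx
  subst hyx
  have hopen : IsOpen ({y} : Set ↥P) := by
    have : interior ({y} : Set ↥P) = {y} :=
      Subset.antisymm interior_subset (singleton_subset_iff.2 hy)
    rw [← this]; exact isOpen_interior
  rw [isOpen_induced_iff] at hopen
  obtain ⟨U, hU, hUy⟩ := hopen
  have hyU : (y : X) ∈ U := by
    have : y ∈ ((↑) ⁻¹' U : Set ↥P) := by rw [hUy]; exact rfl
    exact this
  obtain ⟨z, hz, hzy⟩ := (preperfect_iff_nhds.1 hP.2) (y : X) y.2 U (hU.mem_nhds hyU)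
  have : (⟨z, hz.2⟩ : ↥P) ∈ ((↑) ⁻¹' U : Set ↥P) := hz.1
  rw [hUy] at this
  exact hzy (congrArg Subtype.val this)

/-- A countable subset of (the subtype of) a perfect set is meagre. -/
lemma countable_isMeagre_of_perfect {X : Type*} [TopologicalSpace X] [T1Space X]
    {P : Set X} (hP : Perfect P) {T : Set ↥P} (hT : T.Countable) : IsMeagre T := by
  rcases T.eq_empty_or_nonempty with rfl | hne
  · exact IsMeagre.empty
  · obtain ⟨f, rfl⟩ := hT.exists_eq_range hne
    rw [range_eq_iUnion]
    exact isMeagre_iUnion fun n => (singleton_isNowhereDense_of_perfect hP (f n)).isMeagre'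

theorem stmt8 {X : Type*} [TopologicalSpace X] [PolishSpace X]
    (hX : Perfect (Set.univ : Set X)) (A : Set X) (hA : IsLambdaPrimeSet A) :
    CPM A := by
  intro P hP
  -- choose countable dense subsets of each `P n`
  have hsep : ∀ n, ∃ t : Set ↥(P n), t.Countable ∧ Dense t := fun n =>
    TopologicalSpace.exists_countable_dense _
  choose t htc htd using hsep
  set D : Set X := ⋃ n, (↑) '' (t n) with hD
  have hDc : D.Countable := countable_iUnion fun n => (htc n).image _
  obtain ⟨G, hG, hGD⟩ := hA D hDc
  obtain ⟨f, hfo, hfG⟩ := hG.eq_iInter_nat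
  have hDG : D ⊆ G := by
    intro x hx
    have : x ∈ (A ∪ D) ∩ G := by rw [hGD]; exact hx
    exact this.2
  refine ⟨Gᶜ ∪ D, ?_, ?_, ?_⟩
  · -- Fσ
    rcases D.eq_empty_or_nonempty with hDe | hDne
    · refine ⟨fun n => (f n)ᶜ, fun n => (hfo n).isClosed_compl, ?_⟩
      rw [hDe, union_empty, hfG, compl_iInter]
    · obtain ⟨g, hg⟩ := hDc.exists_eq_range hDne
      refine ⟨fun n => (f n)ᶜ ∪ {g n}, fun n => ((hfo n).isClosed_compl).union isClosed_singleton, ?_⟩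
      rw [iUnion_union_distrib, ← compl_iInter, ← hfG, hg, ← range_eq_iUnion]
  · -- A ⊆ F
    intro x hx
    by_cases hxG : x ∈ G
    · right
      have : x ∈ (A ∪ D) ∩ G := ⟨Or.inl hx, hxG⟩
      rw [hGD] at this; exact this
    · exact Or.inl hxG
  · -- meager in each P n
    intro n
    have hPn := (hP n).1
    rw [MeagerIn, preimage_union]
    have h1 : IsMeagre ((↑) ⁻¹' Gᶜ : Set ↥(P n)) := by
      have : ((↑) ⁻¹' Gᶜ : Set ↥(P n)) = ⋃ k, (↑) ⁻¹' (f k)ᶜ := by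
        rw [hfG, compl_iInter, preimage_iUnion]
      rw [this]
      refine isMeagre_iUnion fun k => ?_
      have hdense : Dense ((↑) ⁻¹' (f k) : Set ↥(P n)) := by
        refine Dense.mono ?_ (htd n)
        intro y hy
        have : (y : X) ∈ D := mem_iUnion.2 ⟨n, mem_image_of_mem _ hy⟩
        have : (y : X) ∈ G := hDG this
        rw [hfG] at this
        exact mem_iInter.1 this k
      have hclosed : IsClosed ((↑) ⁻¹' (f k)ᶜ : Set ↥(P n)) :=
        ((hfo k).preimage continuous_subtype_val).isClosed_compl
      have hnd : IsNowhereDense ((↑) ⁻¹' (f k)ᶜ : Set ↥(P n)) := by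
        have := isClosed_isNowhereDense_iff_compl
          (s := ((↑) ⁻¹' (f k)ᶜ : Set ↥(P n)))
        rw [preimage_compl, compl_compl] at this
        exact (this.2 ⟨(hfo k).preimage continuous_subtype_val, hdense⟩).2
      exact hnd.isMeagre'
    have h2 : IsMeagre ((↑) ⁻¹' D : Set ↥(P n)) :=
      countable_isMeagre_of_perfect hPn (hDc.preimage Subtype.val_injective)
    rw [IsMeagre, compl_union] at *
    exact (residual _).inter_sets h1 h2
end

section
/- Every subset of a perfect Polish space X of cardinality less than 𝔟 is countably perfectly meager in X, where 𝔟 is the bounding number (the least cardinality of a subset of ℕ^ℕ unbounded in the eventual domination order ≤*). -/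
open Set

/-- Eventual domination `f ≤* g`. -/
def EvLE (f g : ℕ → ℕ) : Prop := ∀ᶠ n in Filter.atTop, f n ≤ g n

/-- The bounding number `𝔟`: the least cardinality of a `≤*`-unbounded family. -/
noncomputable def bNum : Cardinal :=
  sInf {c : Cardinal | ∃ S : Set (ℕ → ℕ), Cardinal.mk S = c ∧ ∀ g, ∃ f ∈ S, ¬ EvLE f g}

lemma bNum_le_continuum : bNum ≤ Cardinal.continuum := by
  apply csInf_le'
  refine ⟨Set.univ, ?_, ?_⟩
  · rw [Cardinal.mk_univ, Cardinal.mk_arrow]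
    simp [Cardinal.power_self_eq le_rfl]
  · intro g
    refine ⟨fun n => g n + 1, trivial, fun h => ?_⟩
    obtain ⟨n, hn⟩ := h.exists
    simp at hn

lemma bounded_of_lt_bNum {S : Set (ℕ → ℕ)} (h : Cardinal.mk S < bNum) :
    ∃ g, ∀ f ∈ S, EvLE f g := by
  by_contra hc
  push_neg at hc
  have hmem : Cardinal.mk S ∈
      {c : Cardinal | ∃ T : Set (ℕ → ℕ), Cardinal.mk T = c ∧ ∀ g, ∃ f ∈ T, ¬ EvLE f g} :=
    ⟨S, rfl, hc⟩
  exact absurd (csInf_le' hmem) (not_le.2 h)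

theorem stmt9 {X : Type} [TopologicalSpace X] [PolishSpace X]
    (hX : Perfect (Set.univ : Set X)) (A : Set X) (hA : Cardinal.mk A < bNum) :
    CPM A := by
  intro P hP
  by_cases hAe : A.Nonempty
  swap
  · refine ⟨∅, ⟨fun _ => ∅, fun _ => isClosed_empty, by simp⟩, ?_, ?_⟩
    · rw [Set.not_nonempty_iff_eq_empty] at hAe; simp [hAe]
    · intro n
      show IsMeagre ((↑) ⁻¹' (∅ : Set X) : Set (P n))
      simp only [Set.preimage_empty]
      exact IsMeagre.empty
  letI := TopologicalSpace.upgradeIsCompletelyMetrizable X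
  -- any nonempty perfect set contains a point outside A, and is infinite
  have key : ∀ C : Set X, Perfect C → C.Nonempty → (∃ y ∈ C, y ∉ A) ∧ C.Infinite := by
    intro C hC hCne
    obtain ⟨f, hrange, -, hinj⟩ := hC.exists_nat_bool_injection hCne
    constructor
    · by_contra hcon
      push_neg at hcon
      have hsub : range f ⊆ A := fun y hy => hcon y (hrange hy)
      have hle : Cardinal.mk (ℕ → Bool) ≤ Cardinal.mk A :=
        Cardinal.mk_le_of_injective
          (f := fun t => (⟨f t, hsub (mem_range_self t)⟩ : A))
          (fun a b hab => hinj (congrArg Subtype.val hab))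
      have hcb : Cardinal.mk (ℕ → Bool) = Cardinal.continuum := by
        rw [Cardinal.mk_arrow]; simp [Cardinal.mk_bool]
      rw [hcb] at hle
      exact absurd hA (not_lt.2 (le_trans bNum_le_continuum hle))
    · exact (Set.infinite_range_of_injective hinj).mono hrange
  -- points of perfect traces in open sets, avoiding A
  have L3 : ∀ (n : ℕ) (U : Set X), IsOpen U → (U ∩ P n).Nonempty →
      (∃ y, y ∈ U ∩ P n ∧ y ∉ A) ∧ (U ∩ P n).Infinite := by
    rintro n U hU ⟨x, hxU, hxP⟩
    obtain ⟨ε, hε, hball⟩ := Metric.isOpen_iff.1 hU x hxU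
    have hVsub : closure (Metric.ball x (ε/2)) ⊆ U :=
      (Metric.closure_ball_subset_closedBall.trans
        (Metric.closedBall_subset_ball (by linarith))).trans hball
    have hx' : x ∈ Metric.ball x (ε/2) := Metric.mem_ball_self (by linarith)
    obtain ⟨hperf, hne⟩ := (hP n).1.closure_nhds_inter x hxP hx' Metric.isOpen_ball
    have hCsub : closure (Metric.ball x (ε/2) ∩ P n) ⊆ U ∩ P n := by
      intro y hy
      refine ⟨hVsub (closure_mono inter_subset_left hy), ?_⟩
      have := closure_mono (inter_subset_right) hy
      rwa [(hP n).1.closed.closure_eq] at this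
    obtain ⟨⟨y, hyC, hyA⟩, hinf⟩ := key _ hperf hne
    exact ⟨⟨y, hCsub hyC, hyA⟩, hinf.mono hCsub⟩
  -- countable basis
  obtain ⟨b, hbc', hbne, hbasis⟩ := TopologicalSpace.exists_countable_basis X
  have hbnonempty : b.Nonempty := by
    obtain ⟨x, -⟩ := hAe
    obtain ⟨v, hv, -, -⟩ := hbasis.exists_subset_of_mem_open (mem_univ x) isOpen_univ
    exact ⟨v, hv⟩
  obtain ⟨B, hB⟩ := hbc'.exists_eq_range hbnonempty
  have hBopen : ∀ i, IsOpen (B i) := fun i =>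
    hbasis.isOpen (by rw [hB]; exact mem_range_self i)
  have hbasis' : ∀ (x : X) (u : Set X), x ∈ u → IsOpen u →
      ∃ i, x ∈ B i ∧ B i ⊆ u := by
    intro x u hxu hu
    obtain ⟨v, hvb, hxv, hvu⟩ := hbasis.exists_subset_of_mem_open hxu hu
    rw [hB] at hvb
    obtain ⟨i, rfl⟩ := hvb
    exact ⟨i, hxv, hvu⟩
  -- choose points
  have hpick : ∀ n i : ℕ, ∃ y, ((B i ∩ P n).Nonempty → y ∈ B i ∩ P n) ∧ y ∉ A := by
    intro n i
    by_cases h : (B i ∩ P n).Nonempty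
    · obtain ⟨⟨y, hy, hyA⟩, -⟩ := L3 n (B i) (hBopen i) h
      exact ⟨y, fun _ => hy, hyA⟩
    · obtain ⟨⟨y, hy, hyA⟩, -⟩ := L3 n univ isOpen_univ (by simpa using (hP n).2)
      exact ⟨y, fun hc => absurd hc h, hyA⟩
  choose d0 hd0 hd0A using hpick
  set d : ℕ → X := fun j => d0 j.unpair.1 j.unpair.2 with hd_def
  have hdA : ∀ j, d j ∉ A := fun j => hd0A _ _
  -- the functions f_x
  have hfx0 : ∀ x ∈ A, ∀ j : ℕ, ∃ m : ℕ, 1/((m:ℝ)+1) < dist x (d j) := by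
    intro x hx j
    have hpos : 0 < dist x (d j) := dist_pos.2 (fun he => hdA j (he ▸ hx))
    obtain ⟨m, hm⟩ := exists_nat_gt (1 / dist x (d j))
    refine ⟨m, ?_⟩
    rw [div_lt_iff₀ (by positivity)]
    rw [div_lt_iff₀ hpos] at hm
    nlinarith
  choose! fx hfx using hfx0
  obtain ⟨g, hg⟩ := bounded_of_lt_bNum (S := fx '' A)
    (lt_of_le_of_lt Cardinal.mk_image_le hA)
  set U : ℕ → Set X := fun k => ⋃ j, ⋃ (_ : k ≤ j), Metric.ball (d j) (1/((g j:ℝ)+1))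
    with hU_def
  have hUopen : ∀ k, IsOpen (U k) :=
    fun k => isOpen_iUnion fun j => isOpen_iUnion fun _ => Metric.isOpen_ball
  refine ⟨⋃ k, (U k)ᶜ, ⟨fun k => (U k)ᶜ, fun k => (hUopen k).isClosed_compl, rfl⟩, ?_, ?_⟩
  · -- A ⊆ F
    intro x hx
    obtain ⟨N, hN⟩ := Filter.eventually_atTop.1 (hg _ (mem_image_of_mem _ hx))
    refine mem_iUnion.2 ⟨N, fun hxU => ?_⟩
    simp only [hU_def, mem_iUnion] at hxU
    obtain ⟨j, hj, hxball⟩ := hxU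
    have h1 : 1/((g j:ℝ)+1) ≤ 1/((fx x j:ℝ)+1) := by
      apply one_div_le_one_div_of_le (by positivity)
      have := hN j hj
      exact_mod_cast by omega
    have h2 := hfx x hx j
    rw [Metric.mem_ball] at hxball
    linarith
  · -- MeagerIn
    intro n
    show IsMeagre ((↑) ⁻¹' (⋃ k, (U k)ᶜ) : Set (P n))
    rw [preimage_iUnion]
    apply isMeagre_iUnion
    intro k
    have hcompl : (((↑) ⁻¹' (U k)ᶜ : Set (P n)))ᶜ = ((↑) ⁻¹' (U k) : Set (P n)) := by
      rw [← preimage_compl, compl_compl]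
    rw [IsMeagre, hcompl]
    apply residual_of_dense_open ((hUopen k).preimage continuous_subtype_val)
    rw [dense_iff_inter_open]
    rintro W hW ⟨⟨x, hxP⟩, hxW⟩
    obtain ⟨V, hVopen, hVeq⟩ := isOpen_induced_iff.1 hW
    have hxV : x ∈ V := by rw [← hVeq] at hxW; exact hxW
    have hVP : (V ∩ P n).Nonempty := ⟨x, hxV, hxP⟩
    -- the set of basis indices inside V meeting P n is infinite
    have hI : {i : ℕ | B i ⊆ V ∧ (B i ∩ P n).Nonempty}.Infinite := by
      by_contra hfin
      rw [Set.not_infinite] at hfin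
      have hTfin : ((fun i => d0 n i) '' {i : ℕ | B i ⊆ V ∧ (B i ∩ P n).Nonempty}).Finite :=
        hfin.image _
      obtain ⟨z, hz, hzT⟩ := ((L3 n V hVopen hVP).2.diff hTfin).nonempty
      have hz' : z ∈ V \ ((fun i => d0 n i) '' {i : ℕ | B i ⊆ V ∧ (B i ∩ P n).Nonempty}) :=
        ⟨hz.1, hzT⟩
      obtain ⟨i, hzi, hisub⟩ := hbasis' z _ hz' (hVopen.sdiff hTfin.isClosed)
      have hiI : i ∈ {i : ℕ | B i ⊆ V ∧ (B i ∩ P n).Nonempty} :=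
        ⟨hisub.trans diff_subset, ⟨z, hzi, hz.2⟩⟩
      have hmem : d0 n i ∈ B i ∩ P n := hd0 n i hiI.2
      exact (hisub hmem.1).2 (mem_image_of_mem _ hiI)
    obtain ⟨i, hiI, hik⟩ := hI.exists_gt k
    have hjk : k ≤ Nat.pair n i := le_trans (le_of_lt hik) (Nat.right_le_pair n i)
    have hdj : d (Nat.pair n i) = d0 n i := by simp [hd_def, Nat.unpair_pair]
    have hdmem : d0 n i ∈ B i ∩ P n := hd0 n i hiI.2
    have hdU : d0 n i ∈ U k := by
      refine mem_iUnion.2 ⟨Nat.pair n i, mem_iUnion.2 ⟨hjk, ?_⟩⟩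
      rw [hdj]
      exact Metric.mem_ball_self (by positivity)
    refine ⟨⟨d0 n i, hdmem.2⟩, ?_, ?_⟩
    · rw [← hVeq]
      exact hiI.1 hdmem.1
    · exact hdU
end

section
/- Every subset of 2^ℕ which is perfectly meager in the transitive sense is countably perfectly meager in 2^ℕ. -/
open Set

/-- Coordinatewise addition mod 2 on `2^ℕ`. -/
def cAdd (x y : ℕ → Bool) : ℕ → Bool := fun n => xor (x n) (y n)

/-- The translate `P + t` of a set `P ⊆ 2^ℕ`. -/
def cTranslate (P : Set (ℕ → Bool)) (t : ℕ → Bool) : Set (ℕ → Bool) :=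
  (fun x => cAdd x t) '' P

/-- `A` is perfectly meager in the transitive sense. -/
def AFCprime (A : Set (ℕ → Bool)) : Prop :=
  ∀ P : Set (ℕ → Bool), PerfectSet P →
    ∃ F : Set (ℕ → Bool), IsFsigma F ∧ A ⊆ F ∧
      ∀ t : ℕ → Bool, MeagerIn F (cTranslate P t)

namespace Stmt11Aux

abbrev XX := ℕ → Bool

def addT (t x : XX) : XX := fun n => xor (x n) (t n)

lemma addT_addT (t x : XX) : addT t (addT t x) = x := by
  funext n; simp [addT, Bool.xor_assoc]

lemma addT_inj (t : XX) : Function.Injective (addT t) :=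
  Function.LeftInverse.injective (g := addT t) (addT_addT t)

lemma continuous_addT (t : XX) : Continuous (addT t) :=
  continuous_pi fun n => Continuous.comp (g := fun b => xor b (t n))
    continuous_of_discreteTopology (continuous_apply n)

lemma cTranslate_eq (P : Set XX) (t : XX) : cTranslate P t = addT t '' P := rfl

def cyl (y : XX) (m : ℕ) : Set XX := {x | ∀ k < m, x k = y k}

lemma mem_cyl_self (y : XX) (m : ℕ) : y ∈ cyl y m := fun _ _ => rfl

lemma isOpen_cyl (y : XX) (m : ℕ) : IsOpen (cyl y m) := by
  have : cyl y m = ⋂ k ∈ Finset.range m, (fun x : XX => x k) ⁻¹' {y k} := by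
    ext x; simp [cyl]
  rw [this]
  exact isOpen_biInter_finset fun k _ =>
    (isOpen_discrete _).preimage (continuous_apply k)

lemma isClosed_cyl (y : XX) (m : ℕ) : IsClosed (cyl y m) := by
  have : cyl y m = ⋂ k, ⋂ _ : k < m, (fun x : XX => x k) ⁻¹' {y k} := by
    ext x; simp [cyl]
  rw [this]
  exact isClosed_iInter fun k => isClosed_iInter fun _ =>
    (isClosed_discrete _).preimage (continuous_apply k)

lemma exists_cyl_subset {U : Set XX} (hU : IsOpen U) {y : XX} (hy : y ∈ U) :
    ∃ m, cyl y m ⊆ U := by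
  obtain ⟨I, u, h1, h2⟩ := isOpen_pi_iff.mp hU y hy
  refine ⟨I.sup id + 1, fun x hx => h2 ?_⟩
  intro a ha
  have hlt : a < I.sup id + 1 := Nat.lt_succ_of_le (Finset.le_sup (f := id) ha)
  rw [hx a hlt]
  exact (h1 a ha).2

lemma perfect_inter_cyl {C : Set XX} (hC : Perfect C) (y : XX) (m : ℕ) :
    Perfect (C ∩ cyl y m) := by
  refine ⟨hC.closed.inter (isClosed_cyl y m), ?_⟩
  have := hC.acc.open_inter (isOpen_cyl y m)
  rwa [inter_comm] at this

def sig (i : ℕ) : XX := fun k => decide (k = i)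

def zpt : XX := fun _ => false

def lcyl (s : List Bool) : Set XX := cyl (fun k => s.getD k false) s.length

/-- The chosen portion for index `i`. -/
def QQ (Ps : ℕ → Set XX) (e : ℕ → ℕ × List Bool) (i : ℕ) : Set XX :=
  Ps (e i).1 ∩ lcyl (e i).2

open Classical in
noncomputable def RR (Ps : ℕ → Set XX) (e : ℕ → ℕ × List Bool) (i : ℕ) : Set XX :=
  if (QQ Ps e i).Nonempty then QQ Ps e i else Ps (e i).1

section

variable (Ps : ℕ → Set XX) (e : ℕ → ℕ × List Bool) (xx : ℕ → XX)

def tr (i : ℕ) : XX := fun k => xor (xx i k) (sig i k)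

def DD (i : ℕ) : Set XX := RR Ps e i ∩ cyl (xx i) (i + 1)

def CC (i : ℕ) : Set XX := addT (tr xx i) '' DD Ps e xx i

def P0 : Set XX := {zpt} ∪ ⋃ i, CC Ps e xx i

variable {Ps e xx}

lemma RR_perfect (hPs : ∀ n, PerfectSet (Ps n)) (i : ℕ) :
    Perfect (RR Ps e i) ∧ (RR Ps e i).Nonempty := by
  rw [RR]
  split_ifs with h
  · refine ⟨?_, h⟩
    exact perfect_inter_cyl (hPs (e i).1).1 _ _
  · exact ⟨(hPs (e i).1).1, (hPs (e i).1).2⟩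

variable (hPs : ∀ n, PerfectSet (Ps n)) (hxx : ∀ i, xx i ∈ RR Ps e i)

include hxx in
lemma mem_DD (i : ℕ) : xx i ∈ DD Ps e xx i := ⟨hxx i, mem_cyl_self _ _⟩

/-- the key pointwise computation -/
lemma addT_tr_eq_iff (i : ℕ) (x : XX) (k : ℕ) :
    addT (tr xx i) x k = sig i k ↔ x k = xx i k := by
  simp only [addT, tr]
  cases x k <;> cases xx i k <;> cases sig i k <;> simp

include hxx in
lemma CC_subset_cyl (i : ℕ) : CC Ps e xx i ⊆ cyl (sig i) (i + 1) := by
  rintro - ⟨d, hd, rfl⟩ k hk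
  exact (addT_tr_eq_iff i d k).mpr (hd.2 k hk)

end

end Stmt11Aux

namespace Stmt11Aux
set_option linter.unusedSectionVars false

section
variable {Ps : ℕ → Set XX} {e : ℕ → ℕ × List Bool} {xx : ℕ → XX}

lemma sig_self (i : ℕ) : sig i i = true := by simp [sig]

lemma sig_ne {i k : ℕ} (h : k ≠ i) : sig i k = false := by simp [sig, h]

lemma mem_CC_unique (hxx : ∀ i, xx i ∈ RR Ps e i) {i j : ℕ} {x : XX}
    (hj : x ∈ CC Ps e xx j) (hi : x ∈ cyl (sig i) (i + 1)) : j = i := by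
  have hxj : x j = true := by
    rw [CC_subset_cyl hxx j hj j (Nat.lt_succ_self j)]; exact sig_self j
  have hxi : x i = true := by rw [hi i (Nat.lt_succ_self i)]; exact sig_self i
  rcases Nat.lt_trichotomy j i with h | h | h
  · exfalso
    have : x j = false := by
      rw [hi j (Nat.lt_succ_of_lt h)]; exact sig_ne (Nat.ne_of_lt h)
    rw [hxj] at this; exact absurd this (by simp)
  · exact h
  · exfalso
    have : x i = false := by
      rw [CC_subset_cyl hxx j hj i (Nat.lt_succ_of_lt h)]
      exact sig_ne (Nat.ne_of_lt h)
    rw [hxi] at this; exact absurd this (by simp)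

lemma DD_closed (hPs : ∀ n, PerfectSet (Ps n)) (i : ℕ) : IsClosed (DD Ps e xx i) :=
  (RR_perfect hPs i).1.closed.inter (isClosed_cyl _ _)

lemma CC_closed (hPs : ∀ n, PerfectSet (Ps n)) (i : ℕ) : IsClosed (CC Ps e xx i) :=
  (((DD_closed hPs i).isCompact).image (continuous_addT _)).isClosed

lemma CC_nonempty (hxx : ∀ i, xx i ∈ RR Ps e i) (i : ℕ) : (CC Ps e xx i).Nonempty :=
  ⟨addT (tr xx i) (xx i), mem_image_of_mem _ (mem_DD hxx i)⟩

lemma CC_subset_P0 (i : ℕ) : CC Ps e xx i ⊆ P0 Ps e xx :=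
  fun x hx => Or.inr (mem_iUnion.mpr ⟨i, hx⟩)

lemma P0_closed (hPs : ∀ n, PerfectSet (Ps n)) (hxx : ∀ i, xx i ∈ RR Ps e i) :
    IsClosed (P0 Ps e xx) := by
  rw [← isOpen_compl_iff, isOpen_iff_forall_mem_open]
  intro y hy
  have hyz : y ≠ zpt := fun h => hy (by rw [h]; exact Or.inl rfl)
  have hex : ∃ k, y k = true := by
    by_contra h
    push_neg at h
    apply hyz
    funext k
    cases hk : y k
    · rfl
    · exact absurd hk (h k)
  set m := Nat.find hex with hmdef
  have hym : y m = true := Nat.find_spec hex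
  have hylt : ∀ k < m, y k = false := by
    intro k hk
    have := Nat.find_min hex hk
    cases hyk : y k
    · rfl
    · exact absurd hyk this
  refine ⟨(CC Ps e xx m)ᶜ ∩ cyl (sig m) (m + 1), ?_, ?_, ?_, ?_⟩
  · rintro x ⟨hxC, hxcyl⟩ hxP0
    rcases hxP0 with hz | hC
    · have h1 : x m = true := by rw [hxcyl m (Nat.lt_succ_self m)]; exact sig_self m
      rw [mem_singleton_iff.mp hz] at h1
      simp [zpt] at h1
    · obtain ⟨j, hj⟩ := mem_iUnion.mp hC
      have := mem_CC_unique hxx hj hxcyl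
      subst this
      exact hxC hj
  · exact ((CC_closed hPs m).isOpen_compl).inter (isOpen_cyl _ _)
  · exact fun h => hy (CC_subset_P0 m h)
  · intro k hk
    rcases Nat.lt_succ_iff_lt_or_eq.mp hk with h | h
    · rw [hylt k h, sig_ne (Nat.ne_of_lt h)]
    · subst h; rw [hym, sig_self]

lemma P0_perfect (hPs : ∀ n, PerfectSet (Ps n)) (hxx : ∀ i, xx i ∈ RR Ps e i) :
    PerfectSet (P0 Ps e xx) := by
  refine ⟨⟨P0_closed hPs hxx, ?_⟩, ⟨zpt, Or.inl rfl⟩⟩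
  intro x hx
  rw [accPt_iff_nhds]
  intro U hU
  rcases hx with hz | hC
  · obtain ⟨V, hVU, hVo, hxV⟩ := mem_nhds_iff.mp hU
    obtain ⟨m, hm⟩ := exists_cyl_subset hVo hxV
    obtain ⟨c, hc⟩ := CC_nonempty hxx m
    have hccyl := CC_subset_cyl hxx m hc
    have hcx : c ∈ cyl x m := by
      intro k hk
      rw [mem_singleton_iff.mp hz]
      rw [hccyl k (Nat.lt_succ_of_lt hk)]
      exact sig_ne (Nat.ne_of_lt hk)
    refine ⟨c, ⟨hVU (hm hcx), CC_subset_P0 m hc⟩, ?_⟩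
    intro hcz
    have h1 : c m = true := by rw [hccyl m (Nat.lt_succ_self m)]; exact sig_self m
    rw [hcz, mem_singleton_iff.mp hz] at h1
    simp [zpt] at h1
  · obtain ⟨i, hi⟩ := mem_iUnion.mp hC
    obtain ⟨d, hd, rfl⟩ := hi
    have hDD : Perfect (DD Ps e xx i) := perfect_inter_cyl (RR_perfect hPs i).1 _ _
    have hacc := hDD.acc d hd
    rw [accPt_iff_nhds] at hacc
    obtain ⟨y, ⟨hyU, hyD⟩, hyne⟩ := hacc ((addT (tr xx i)) ⁻¹' U)
      (ContinuousAt.preimage_mem_nhds ((continuous_addT _).continuousAt) hU)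
    exact ⟨addT (tr xx i) y,
      ⟨hyU, CC_subset_P0 i (mem_image_of_mem _ hyD)⟩,
      fun hcon => hyne (addT_inj _ hcon)⟩

lemma addT_image_CC (i : ℕ) :
    addT (tr xx i) '' (CC Ps e xx i) = DD Ps e xx i := by
  rw [CC, ← image_comp]
  have : (addT (tr xx i)) ∘ (addT (tr xx i)) = id := funext (addT_addT _)
  rw [this, image_id]

lemma P0_inter_cyl (hxx : ∀ i, xx i ∈ RR Ps e i) (i : ℕ) :
    P0 Ps e xx ∩ cyl (sig i) (i + 1) = CC Ps e xx i := by
  apply Subset.antisymm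
  · rintro x ⟨hxP, hxcyl⟩
    rcases hxP with hz | hC
    · exfalso
      have h1 : x i = true := by rw [hxcyl i (Nat.lt_succ_self i)]; exact sig_self i
      rw [mem_singleton_iff.mp hz] at h1
      simp [zpt] at h1
    · obtain ⟨j, hj⟩ := mem_iUnion.mp hC
      have := mem_CC_unique hxx hj hxcyl
      subst this; exact hj
  · exact fun x hx => ⟨CC_subset_P0 i hx, CC_subset_cyl hxx i hx⟩

lemma translate_inter_cyl (hxx : ∀ i, xx i ∈ RR Ps e i) (i : ℕ) :
    cTranslate (P0 Ps e xx) (tr xx i) ∩ cyl (xx i) (i + 1) ⊆ DD Ps e xx i := by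
  rintro q ⟨⟨p, hp, rfl⟩, hq⟩
  show addT (tr xx i) p ∈ DD Ps e xx i
  have hpcyl : addT (tr xx i) p ∈ cyl (xx i) (i+1) := hq
  have hpmem : p ∈ CC Ps e xx i := by
    rw [← P0_inter_cyl hxx i]
    refine ⟨hp, fun k hk => ?_⟩
    have h2 : addT (tr xx i) p k = xx i k := hpcyl k hk
    have h3 := addT_addT (tr xx i) p
    -- p k = addT (tr xx i) (addT (tr xx i) p) k
    conv_lhs => rw [← h3]
    exact (addT_tr_eq_iff i (addT (tr xx i) p) k).mpr h2
  rw [← addT_image_CC (i := i)]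
  exact mem_image_of_mem _ hpmem

lemma DD_subset_translate (i : ℕ) :
    DD Ps e xx i ⊆ cTranslate (P0 Ps e xx) (tr xx i) := by
  rw [cTranslate_eq, ← addT_image_CC (i := i)]
  exact image_mono (CC_subset_P0 i)

lemma lcyl_ofFn (a : XX) (m : ℕ) :
    lcyl (List.ofFn fun k : Fin m => a k) = cyl a m := by
  have hlen : (List.ofFn fun k : Fin m => a k).length = m := List.length_ofFn
  have hget : ∀ k, k < m → (List.ofFn fun k : Fin m => a k).getD k false = a k := by
    intro k hk
    rw [List.getD_eq_getElem _ _ (by rw [hlen]; exact hk)]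
    simp
  unfold lcyl
  rw [hlen]
  ext x
  simp only [cyl, mem_setOf_eq]
  exact ⟨fun h k hk => (hget k hk) ▸ h k hk, fun h k hk => (hget k hk).symm ▸ h k hk⟩

end
end Stmt11Aux

open Stmt11Aux in
theorem stmt11 (A : Set (ℕ → Bool)) (hA : AFCprime A) : CPM A := by
  classical
  intro Ps hPs
  obtain ⟨e, he⟩ := exists_surjective_nat (ℕ × List Bool)
  have hR := fun i => RR_perfect (Ps := Ps) (e := e) hPs i
  choose xx hxx using fun i => (hR i).2
  obtain ⟨F, hFsig, hAF, hmeag⟩ := hA (P0 Ps e xx) (P0_perfect hPs hxx)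
  obtain ⟨S, hSclosed, hFeq⟩ := hFsig
  refine ⟨F, ⟨S, hSclosed, hFeq⟩, hAF, ?_⟩
  intro n
  unfold MeagerIn
  rw [hFeq, preimage_iUnion]
  apply isMeagre_iUnion
  intro j
  set G : Set (Ps n) := ((↑) ⁻¹' S j) with hGdef
  have hGclosed : IsClosed G := (hSclosed j).preimage continuous_subtype_val
  have hGint : interior G = ∅ := by
    by_contra hne
    obtain ⟨a, ha⟩ := nonempty_iff_ne_empty.mpr hne
    obtain ⟨U, hUopen, hUeq⟩ := isOpen_induced_iff.mp (isOpen_interior (s := G))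
    have haU : (a : XX) ∈ U := by rw [← hUeq] at ha; exact ha
    obtain ⟨m, hm⟩ := exists_cyl_subset hUopen haU
    obtain ⟨i, hie⟩ := he (n, List.ofFn fun k : Fin m => (a : XX) k)
    have hQi : QQ Ps e i = Ps n ∩ cyl (a : XX) m := by
      simp only [QQ, hie, lcyl_ofFn]
    have hQnon : (QQ Ps e i).Nonempty :=
      ⟨a, by rw [hQi]; exact ⟨a.2, mem_cyl_self _ _⟩⟩
    have hRi : RR Ps e i = Ps n ∩ cyl (a : XX) m := by
      rw [RR, if_pos hQnon, hQi]
    have hQS : Ps n ∩ cyl (a : XX) m ⊆ S j := by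
      rintro p ⟨hp1, hp2⟩
      have hmem : (⟨p, hp1⟩ : Ps n) ∈ Subtype.val ⁻¹' U := hm hp2
      rw [hUeq] at hmem
      have h2 : (⟨p, hp1⟩ : Ps n) ∈ G := interior_subset hmem
      exact h2
    have hmi := hmeag (tr xx i)
    unfold MeagerIn at hmi
    have hcomp : IsCompact (cTranslate (P0 Ps e xx) (tr xx i)) :=
      ((P0_closed hPs hxx).isCompact).image (continuous_addT _)
    haveI : CompactSpace (cTranslate (P0 Ps e xx) (tr xx i)) :=
      isCompact_iff_compactSpace.mp hcomp
    have hVopen : IsOpen (Subtype.val ⁻¹' (cyl (xx i) (i + 1)) :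
        Set (cTranslate (P0 Ps e xx) (tr xx i))) :=
      (isOpen_cyl _ _).preimage continuous_subtype_val
    have hVne : (Subtype.val ⁻¹' (cyl (xx i) (i + 1)) :
        Set (cTranslate (P0 Ps e xx) (tr xx i))).Nonempty := by
      have hxmem : xx i ∈ cTranslate (P0 Ps e xx) (tr xx i) :=
        DD_subset_translate i (mem_DD hxx i)
      exact ⟨⟨xx i, hxmem⟩, mem_cyl_self _ _⟩
    have hVsub : (Subtype.val ⁻¹' (cyl (xx i) (i + 1)) :
        Set (cTranslate (P0 Ps e xx) (tr xx i))) ⊆ Subtype.val ⁻¹' F := by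
      rintro ⟨q, hq⟩ hqV
      have hqD : q ∈ DD Ps e xx i := translate_inter_cyl hxx i ⟨hq, hqV⟩
      have hqR : q ∈ Ps n ∩ cyl (a : XX) m := by rw [← hRi]; exact hqD.1
      have hqS : q ∈ S j := hQS hqR
      show q ∈ F
      rw [hFeq]; exact mem_iUnion.mpr ⟨j, hqS⟩
    have hVmeag := hmi.mono hVsub
    have hT2 : T2Space (cTranslate (P0 Ps e xx) (tr xx i)) := by infer_instance
    have hW : WeaklyLocallyCompactSpace (cTranslate (P0 Ps e xx) (tr xx i)) := by infer_instance
    have hLC : LocallyCompactSpace (cTranslate (P0 Ps e xx) (tr xx i)) := by infer_instance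
    haveI : BaireSpace (cTranslate (P0 Ps e xx) (tr xx i)) := by infer_instance
    have hdense := dense_of_mem_residual hVmeag
    obtain ⟨w, hw1, hw2⟩ := hdense.exists_mem_open hVopen hVne
    exact hw1 hw2
  show Gᶜ ∈ residual _
  exact residual_of_dense_open hGclosed.isOpen_compl
    (interior_eq_empty_iff_dense_compl.mp hGint)
end

section
/- Let T ⊆ 2^ℕ have cardinality 2^{ℵ₀}, and let P be a dense G_δ subset of 2^ℕ. Then there exists a function φ : T → P whose graph H = {(t, φ(t)) : t ∈ T} ⊆ T × P has the property that every F_σ-set F in 2^ℕ × 2^ℕ containing H also contains {t} × V for some t ∈ T and some nonempty open set V ⊆ 2^ℕ. -/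
open Set

section aux

variable {Y : Type*} [TopologicalSpace Y] [SecondCountableTopology Y]

open Cardinal

lemma card_closed_le : #{s : Set Y // IsClosed s} ≤ 𝔠 := by
  obtain ⟨b, hbc, -, hb⟩ := TopologicalSpace.exists_countable_basis Y
  have hinj : Function.Injective
      (fun s : {s : Set Y // IsClosed s} => {u : b | (u : Set Y) ⊆ (s : Set Y)ᶜ}) := by
    intro s t hst
    have key : ∀ v (hvb : v ∈ b), (v ⊆ (s : Set Y)ᶜ ↔ v ⊆ (t : Set Y)ᶜ) := fun v hvb =>
      Set.ext_iff.mp hst ⟨v, hvb⟩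
    have hAB : {v | v ∈ b ∧ v ⊆ (s : Set Y)ᶜ} = {v | v ∈ b ∧ v ⊆ (t : Set Y)ᶜ} := by
      ext v
      exact and_congr_right fun hvb => key v hvb
    have hcc : (s : Set Y)ᶜ = (t : Set Y)ᶜ := by
      rw [hb.open_eq_sUnion' s.2.isOpen_compl, hb.open_eq_sUnion' t.2.isOpen_compl]
      exact congrArg Set.sUnion hAB
    exact Subtype.ext (compl_injective hcc)
  calc #{s : Set Y // IsClosed s} ≤ #(Set b) := Cardinal.mk_le_of_injective hinj
    _ = 2 ^ #b := Cardinal.mk_set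
    _ ≤ 2 ^ ℵ₀ := by
        apply Cardinal.power_le_power_left (by norm_num)
        exact (Cardinal.mk_le_aleph0_iff.mpr hbc)
    _ = 𝔠 := Cardinal.two_power_aleph0

lemma card_fsigma_le : #{F : Set Y // IsFsigma F} ≤ 𝔠 := by
  classical
  choose s hscl hseq using fun F : {F : Set Y // IsFsigma F} => F.2
  have hinj : Function.Injective
      (fun F : {F : Set Y // IsFsigma F} => (fun n => (⟨s F n, hscl F n⟩ : {s : Set Y // IsClosed s}))) := by
    intro F G h
    have : (F : Set Y) = G := by
      rw [hseq F, hseq G]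
      exact iUnion_congr fun n => congrArg Subtype.val (congrFun h n)
    exact Subtype.ext this
  calc #{F : Set Y // IsFsigma F} ≤ #(ℕ → {s : Set Y // IsClosed s}) :=
        Cardinal.mk_le_of_injective hinj
    _ = #{s : Set Y // IsClosed s} ^ ℵ₀ := by simp [Cardinal.power_def, Cardinal.mk_eq_aleph0]
    _ ≤ 𝔠 ^ ℵ₀ := Cardinal.power_le_power_right card_closed_le
    _ = 𝔠 := Cardinal.continuum_power_aleph0

end aux

lemma fiber_lemma (P : Set (ℕ → Bool)) (hP : IsGδ P) (hPd : Dense P)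
    (t : ℕ → Bool) (F : Set ((ℕ → Bool) × (ℕ → Bool))) (hF : IsFsigma F)
    (hsub : {t} ×ˢ P ⊆ F) :
    ∃ V : Set (ℕ → Bool), IsOpen V ∧ V.Nonempty ∧ {t} ×ˢ V ⊆ F := by
  obtain ⟨s, hscl, rfl⟩ := hF
  set A : ℕ → Set (ℕ → Bool) := fun n => {x | (t, x) ∈ s n} with hA
  have hAcl : ∀ n, IsClosed (A n) := fun n => (hscl n).preimage (Continuous.prodMk_right t)
  by_cases h : ∃ n, (interior (A n)).Nonempty
  · obtain ⟨n, hn⟩ := h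
    refine ⟨interior (A n), isOpen_interior, hn, ?_⟩
    rintro ⟨a, x⟩ ⟨ha, hx⟩
    rw [mem_singleton_iff] at ha
    subst ha
    exact mem_iUnion.mpr ⟨n, (interior_subset hx : x ∈ A n)⟩
  · exfalso
    push_neg at h
    have hmeag : ∀ n, (A n)ᶜ ∈ residual (ℕ → Bool) := by
      intro n
      have hnwd : IsNowhereDense (A n) := by
        rw [(hAcl n).isNowhereDense_iff]
        exact h n
      have := isClosed_isNowhereDense_iff_compl.mp ⟨hAcl n, hnwd⟩
      exact residual_of_dense_open this.1 this.2
    have hmeagU : (⋃ n, A n)ᶜ ∈ residual (ℕ → Bool) := by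
      rw [compl_iUnion]
      exact countable_iInter_mem.mpr hmeag
    have hPres : P ∈ residual (ℕ → Bool) := mem_residual.mpr ⟨P, subset_rfl, hP, hPd⟩
    have hsubP : P ⊆ ⋃ n, A n := by
      intro x hx
      have : (t, x) ∈ ⋃ n, s n := hsub (mem_prod.mpr ⟨mem_singleton t, hx⟩)
      obtain ⟨n, hn⟩ := mem_iUnion.mp this
      exact mem_iUnion.mpr ⟨n, hn⟩
    have hempty : (⋃ n, A n)ᶜ ∩ P = ∅ := by
      rw [eq_empty_iff_forall_notMem]
      rintro x ⟨hxc, hxP⟩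
      exact hxc (hsubP hxP)
    have : ((⋃ n, A n)ᶜ ∩ P) ∈ residual (ℕ → Bool) := Filter.inter_mem hmeagU hPres
    rw [hempty] at this
    have hd : Dense (∅ : Set (ℕ → Bool)) := dense_of_mem_residual this
    exact (hd.nonempty).ne_empty rfl

theorem stmt12 (T : Set (ℕ → Bool)) (hT : Cardinal.mk T = Cardinal.continuum)
    (P : Set (ℕ → Bool)) (hP : IsGδ P) (hPd : Dense P) :
    ∃ φ : T → (ℕ → Bool), (∀ t, φ t ∈ P) ∧
      ∀ F : Set ((ℕ → Bool) × (ℕ → Bool)), IsFsigma F →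
        {p : (ℕ → Bool) × (ℕ → Bool) | ∃ t : T, p = (↑t, φ t)} ⊆ F →
        ∃ t ∈ T, ∃ V : Set (ℕ → Bool), IsOpen V ∧ V.Nonempty ∧ {t} ×ˢ V ⊆ F := by
  classical
  have hPne : P.Nonempty := hPd.nonempty
  have hcard : Cardinal.mk {F : Set ((ℕ → Bool) × (ℕ → Bool)) // IsFsigma F} ≤ Cardinal.mk T := by
    rw [hT]; exact card_fsigma_le
  obtain ⟨g⟩ := Cardinal.le_def _ _ |>.mp hcard
  have hFne : Nonempty {F : Set ((ℕ → Bool) × (ℕ → Bool)) // IsFsigma F} :=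
    ⟨⟨∅, fun _ => ∅, fun _ => isClosed_empty, by simp⟩⟩
  let e : T → {F : Set ((ℕ → Bool) × (ℕ → Bool)) // IsFsigma F} := Function.invFun g
  have he : Function.Surjective e := Function.invFun_surjective g.injective
  let φ : T → (ℕ → Bool) := fun t =>
    if h : (({(t : ℕ → Bool)} ×ˢ P) \ (e t : Set _)).Nonempty then h.choose.2 else hPne.choose
  refine ⟨φ, ?_, ?_⟩
  · intro t
    show (if h : _ then _ else _) ∈ P
    split_ifs with h
    · exact (mem_prod.mp h.choose_spec.1).2
    · exact hPne.choose_spec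
  · intro F hF hsub
    obtain ⟨t, ht⟩ := he ⟨F, hF⟩
    refine ⟨(t : ℕ → Bool), t.2, ?_⟩
    have hetF : (e t : Set ((ℕ → Bool) × (ℕ → Bool))) = F := by rw [ht]
    by_cases h : (({(t : ℕ → Bool)} ×ˢ P) \ (e t : Set _)).Nonempty
    · exfalso
      have hφ : φ t = h.choose.2 := dif_pos h
      have hch := h.choose_spec
      have h1 : h.choose.1 = (t : ℕ → Bool) := mem_singleton_iff.mp (mem_prod.mp hch.1).1
      have hmem : ((t : ℕ → Bool), φ t) ∈ F := hsub ⟨t, rfl⟩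
      have : h.choose ∈ F := by
        rw [← h1, hφ] at hmem
        simpa using hmem
      exact hch.2 (hetF ▸ this)
    · rw [not_nonempty_iff_eq_empty, diff_eq_empty, hetF] at h
      exact fiber_lemma P hP hPd _ F hF h
end

section
/- Let C_0, C_1, ... be pairwise disjoint meager Cantor sets in 2^ℕ such that each nonempty open set contains some C_n, and let P = 2^ℕ \ ⋃_n C_n. Define the equivalence relation ∼ on 2^ℕ × 2^ℕ whose classes are N_{x|n} × {y} when y ∈ C_n (where N_s is the basic clopen set of sequences extending s), and singletons {(x,y)} when y ∈ P. Then the quotient space K = (2^ℕ × 2^ℕ)/∼ is homeomorphic to 2^ℕ. -/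
open Set

namespace Stmt13Aux

open Filter Topology

abbrev XX := ℕ → Bool

lemma exists_cyl_subset {U : Set XX} (hU : IsOpen U) {y : XX} (hy : y ∈ U) :
    ∃ j, ∀ z : XX, (∀ i < j, z i = y i) → z ∈ U := by
  obtain ⟨I, u, hIu, hsub⟩ := isOpen_pi_iff.1 hU y hy
  refine ⟨I.sup id + 1, fun z hz => hsub ?_⟩
  rw [Set.mem_pi]
  intro i hi
  have hi' : i ∈ I := hi
  have : z i = y i := hz i (Nat.lt_succ_of_le (Finset.le_sup (f := id) hi'))
  rw [this]; exact (hIu i hi').2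

lemma not_isOpen_singleton (y : XX) : ¬ IsOpen ({y} : Set XX) := by
  intro h
  obtain ⟨j, hj⟩ := exists_cyl_subset h (mem_singleton y)
  have hz : ∀ i < j, Function.update y j (!(y j)) i = y i :=
    fun i hi => Function.update_of_ne (Nat.ne_of_lt hi) _ _
  have h2 : Function.update y j (!(y j)) = y := hj _ hz
  have h3 := congrFun h2 j
  rw [Function.update_self] at h3
  simp at h3

/-! ### Brouwer-type theorem for perfect subsets of Cantor space -/

def Nc (A : Set XX) : Set ℕ := {k | ∃ z ∈ A, ∃ w ∈ A, z k ≠ w k}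

noncomputable def kk (A : Set XX) : ℕ := sInf (Nc A)

noncomputable def spl (A : Set XX) (i : Bool) : Set XX :=
  A ∩ (fun z => z (kk A)) ⁻¹' {i}

lemma mem_spl {A : Set XX} {i : Bool} {z : XX} :
    z ∈ spl A i ↔ z ∈ A ∧ z (kk A) = i := by
  simp [spl]

lemma two_points {A : Set XX} (hA : Perfect A) (hne : A.Nonempty) :
    ∃ z ∈ A, ∃ w ∈ A, z ≠ w := by
  obtain ⟨x, hx⟩ := hne
  obtain ⟨y, hy, hyx⟩ := accPt_iff_nhds.1 (hA.acc x hx) univ univ_mem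
  exact ⟨y, hy.2, x, hx, hyx⟩

lemma Nc_ne {A : Set XX} (hA : Perfect A) (hne : A.Nonempty) : (Nc A).Nonempty := by
  obtain ⟨z, hz, w, hw, hzw⟩ := two_points hA hne
  obtain ⟨k, hk⟩ := Function.ne_iff.1 hzw
  exact ⟨k, z, hz, w, hw, hk⟩

lemma kk_mem {A : Set XX} (h : (Nc A).Nonempty) : kk A ∈ Nc A := Nat.sInf_mem h

lemma lt_kk {A : Set XX} {j : ℕ} (h : j < kk A) {z w : XX}
    (hz : z ∈ A) (hw : w ∈ A) : z j = w j := by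
  by_contra hne
  exact absurd (Nat.sInf_le ⟨z, hz, w, hw, hne⟩ : kk A ≤ j) (not_le.2 h)

lemma spl_subset {A : Set XX} {i : Bool} : spl A i ⊆ A := inter_subset_left

lemma spl_nonempty {A : Set XX} (hA : Perfect A) (hne : A.Nonempty) (i : Bool) :
    (spl A i).Nonempty := by
  obtain ⟨z, hz, w, hw, hzw⟩ := kk_mem (Nc_ne hA hne)
  by_cases h : z (kk A) = i
  · exact ⟨z, mem_spl.2 ⟨hz, h⟩⟩
  · refine ⟨w, mem_spl.2 ⟨hw, ?_⟩⟩
    cases i <;> cases hzk : z (kk A) <;> cases hwk : w (kk A) <;> simp_all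

lemma spl_perfect {A : Set XX} (hA : Perfect A) (hne : A.Nonempty) (i : Bool) :
    Perfect (spl A i) := by
  constructor
  · exact hA.closed.inter (IsClosed.preimage (continuous_apply _) isClosed_singleton)
  · intro x hx
    rw [accPt_iff_nhds]
    intro U hU
    have hop : IsOpen ((fun z : XX => z (kk A)) ⁻¹' {i}) :=
      IsOpen.preimage (continuous_apply _) (isOpen_discrete _)
    have hx' := mem_spl.1 hx
    have hU' : U ∩ ((fun z : XX => z (kk A)) ⁻¹' {i}) ∈ 𝓝 x :=
      inter_mem hU (hop.mem_nhds hx'.2)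
    obtain ⟨y, hy, hyx⟩ := accPt_iff_nhds.1 (hA.acc x hx'.1) _ hU'
    exact ⟨y, ⟨hy.1.1, mem_spl.2 ⟨hy.2, hy.1.2⟩⟩, hyx⟩

lemma spl_agree {A : Set XX} {i : Bool} {z w : XX}
    (hz : z ∈ spl A i) (hw : w ∈ spl A i) {j : ℕ} (hj : j ≤ kk A) : z j = w j := by
  rcases lt_or_eq_of_le hj with h | h
  · exact lt_kk h (spl_subset hz) (spl_subset hw)
  · subst h; rw [(mem_spl.1 hz).2, (mem_spl.1 hw).2]

lemma kk_spl_gt {A : Set XX} (hA : Perfect A) (hne : A.Nonempty) (i : Bool) :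
    kk A < kk (spl A i) := by
  obtain ⟨z, hz, w, hw, hzw⟩ := kk_mem (Nc_ne (spl_perfect hA hne i) (spl_nonempty hA hne i))
  by_contra hle
  push_neg at hle
  exact hzw (spl_agree hz hw hle)

noncomputable def EE (D : Set XX) (x : XX) : ℕ → Set XX :=
  fun n => Nat.rec D (fun k B => spl B (x k)) n

lemma EE_succ {D : Set XX} {x : XX} {n : ℕ} : EE D x (n + 1) = spl (EE D x n) (x n) := rfl

lemma EE_perfect {D : Set XX} (hD : Perfect D) (hne : D.Nonempty) (x : XX) :
    ∀ n, Perfect (EE D x n) ∧ (EE D x n).Nonempty := by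
  intro n
  induction n with
  | zero => exact ⟨hD, hne⟩
  | succ n ih => exact ⟨spl_perfect ih.1 ih.2 _, spl_nonempty ih.1 ih.2 _⟩

lemma EE_congr {D : Set XX} {x y : XX} : ∀ n, (∀ i < n, x i = y i) → EE D x n = EE D y n := by
  intro n
  induction n with
  | zero => intro _; rfl
  | succ n ih =>
    intro h
    rw [EE_succ, EE_succ, ih (fun i hi => h i (Nat.lt_succ_of_lt hi)), h n (Nat.lt_succ_self n)]

lemma kk_EE_ge {D : Set XX} (hD : Perfect D) (hne : D.Nonempty) (x : XX) :
    ∀ n, n ≤ kk (EE D x (n + 1)) := by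
  intro n
  induction n with
  | zero => exact Nat.zero_le _
  | succ n ih =>
    have h := kk_spl_gt (EE_perfect hD hne x (n+1)).1 (EE_perfect hD hne x (n+1)).2 (x (n+1))
    rw [← EE_succ] at h
    exact Nat.succ_le_of_lt (lt_of_le_of_lt ih h)

lemma EE_agree {D : Set XX} (hD : Perfect D) (hne : D.Nonempty) {x : XX} {z w : XX} {n : ℕ}
    (hz : z ∈ EE D x (n + 2)) (hw : w ∈ EE D x (n + 2)) {j : ℕ} (hj : j ≤ n) : z j = w j := by
  rw [EE_succ] at hz hw
  exact spl_agree hz hw (le_trans hj (kk_EE_ge hD hne x n))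

theorem perfect_homeo (D : Set XX) (hD : Perfect D) (hne : D.Nonempty) :
    Nonempty (XX ≃ₜ D) := by
  have hcap : ∀ x : XX, (⋂ n, EE D x n).Nonempty := fun x =>
    IsCompact.nonempty_iInter_of_sequence_nonempty_isCompact_isClosed _
      (fun n => by rw [EE_succ]; exact spl_subset)
      (fun n => (EE_perfect hD hne x n).2)
      ((EE_perfect hD hne x 0).1.closed.isCompact)
      (fun n => (EE_perfect hD hne x n).1.closed)
  have g : ∀ x : XX, ∃ z, z ∈ ⋂ n, EE D x n := fun x => hcap x
  choose g hg using g
  have hgE : ∀ x n, g x ∈ EE D x n := fun x n => mem_iInter.1 (hg x) n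
  have huniq : ∀ x z, (∀ n, z ∈ EE D x n) → z = g x := by
    intro x z hz
    funext j
    exact EE_agree hD hne (hz (j + 2)) (hgE x (j + 2)) le_rfl
  have hinj : Function.Injective g := by
    intro x y hxy
    by_contra hne'
    obtain ⟨m0, hm0⟩ := Function.ne_iff.1 hne'
    set m := sInf {n | x n ≠ y n} with hm_def
    have hm : x m ≠ y m := Nat.sInf_mem (⟨m0, hm0⟩ : {n | x n ≠ y n}.Nonempty)
    have hlt : ∀ i < m, x i = y i := by
      intro i hi
      by_contra h
      exact Nat.notMem_of_lt_sInf hi h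
    have hEq : EE D x m = EE D y m := EE_congr m hlt
    have h1 := hgE x (m + 1)
    have h2 := hgE y (m + 1)
    rw [EE_succ] at h1 h2
    rw [← hEq] at h2
    apply hm
    rw [← (mem_spl.1 h1).2, ← (mem_spl.1 h2).2, hxy]
  have hmem : ∀ x, g x ∈ D := fun x => hgE x 0
  have hsurj : ∀ c ∈ D, ∃ x, g x = c := by
    intro c hc
    let A : ℕ → Set XX := fun n => Nat.rec D (fun _ B => spl B (c (kk B))) n
    let x : XX := fun n => c (kk (A n))
    have hEA : ∀ n, EE D x n = A n := by
      intro n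
      induction n with
      | zero => rfl
      | succ n ih =>
        show spl (EE D x n) (x n) = spl (A n) (c (kk (A n)))
        rw [ih]
    have hcA : ∀ n, c ∈ A n := by
      intro n
      induction n with
      | zero => exact hc
      | succ n ih => exact mem_spl.2 ⟨ih, rfl⟩
    refine ⟨x, (huniq x c (fun n => ?_)).symm⟩
    rw [hEA n]; exact hcA n
  have hcont : Continuous g := by
    apply continuous_pi
    intro j
    rw [continuous_iff_continuousAt]
    intro x
    have hopen : IsOpen {y : XX | ∀ i < j + 2, y i = x i} := by
      have heq : {y : XX | ∀ i < j + 2, y i = x i}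
          = ⋂ i ∈ Finset.range (j + 2), (fun y : XX => y i) ⁻¹' {x i} := by
        ext z; simp [Finset.mem_range]
      rw [heq]
      exact isOpen_biInter_finset fun i _ =>
        IsOpen.preimage (continuous_apply i) (isOpen_discrete _)
    have hnb : {y : XX | ∀ i < j + 2, y i = x i} ∈ 𝓝 x :=
      hopen.mem_nhds (fun i _ => rfl)
    have hev : ∀ᶠ y in 𝓝 x, g y j = g x j := by
      filter_upwards [hnb] with y hy
      have hEq : EE D y (j + 2) = EE D x (j + 2) := EE_congr _ hy
      exact EE_agree hD hne (hEq ▸ hgE y (j + 2)) (hgE x (j + 2)) le_rfl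
    exact Filter.Tendsto.congr' (Filter.EventuallyEq.symm hev) tendsto_const_nhds
  let e : XX ≃ D := Equiv.ofBijective (fun x => ⟨g x, hmem x⟩)
    ⟨fun a b hab => hinj (congrArg Subtype.val hab),
     fun d => by obtain ⟨x, hx⟩ := hsurj d d.2; exact ⟨x, Subtype.ext hx⟩⟩
  have he : Continuous e := Continuous.subtype_mk hcont _
  exact ⟨Continuous.homeoOfEquivCompactToT2 he⟩

/-! ### Saturated clopen rectangles in the quotient -/

def Cyl (u : List Bool) : Set XX := {a | ∀ i, i < u.length → a i = u.getD i false}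

lemma isClopen_Cyl (u : List Bool) : IsClopen (Cyl u) := by
  have heq : Cyl u = ⋂ i ∈ Finset.range u.length, (fun a : XX => a i) ⁻¹' {u.getD i false} := by
    ext a; simp [Cyl, Finset.mem_range]
  rw [heq]
  exact isClopen_biInter_finset fun i _ =>
    IsClopen.preimage (isClopen_discrete _) (continuous_apply i)

def apx (j : ℕ) (y : XX) : List Bool := List.ofFn fun i : Fin j => y i

@[simp] lemma apx_length {j : ℕ} {y : XX} : (apx j y).length = j := List.length_ofFn

lemma apx_getD {j i : ℕ} {y : XX} (h : i < j) : (apx j y).getD i false = y i := by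
  have hl : i < (apx j y).length := by simpa using h
  rw [List.getD_eq_getElem _ _ hl]
  simp [apx]

lemma mem_Cyl_apx {j : ℕ} {y : XX} : y ∈ Cyl (apx j y) := by
  intro i hi
  rw [apx_getD (by simpa using hi)]

def Good (C : ℕ → Set XX) (u t : List Bool) : Prop :=
  ∀ k < u.length, ∀ z ∈ Cyl t, z ∉ C k

def RR (u t : List Bool) : Set (XX × XX) := Cyl u ×ˢ Cyl t

def QQ (s : Setoid (XX × XX)) (u t : List Bool) : Set (Quotient s) :=
  Quotient.mk s '' RR u t

lemma sat_lemma {C : ℕ → Set XX} {s : Setoid (XX × XX)}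
    (hs : ∀ p q : XX × XX, s.r p q ↔
      (p.2 = q.2 ∧ (∀ n, p.2 ∈ C n → ∀ i < n, p.1 i = q.1 i) ∧
        (p.2 ∉ ⋃ n, C n → p.1 = q.1)))
    {u t : List Bool} (hgood : Good C u t) :
    Quotient.mk s ⁻¹' QQ s u t = RR u t := by
  apply Subset.antisymm
  · rintro p ⟨q, hq, hqp⟩
    have hr : s.r q p := Quotient.exact hqp
    rw [hs] at hr
    obtain ⟨h2, hagree, hall⟩ := hr
    have hq1 : q.1 ∈ Cyl u := hq.1
    have hq2 : q.2 ∈ Cyl t := hq.2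
    refine ⟨?_, ?_⟩
    · intro i hi
      by_cases hb : ∃ n, q.2 ∈ C n
      · obtain ⟨n, hn⟩ := hb
        have hnu : u.length ≤ n := by
          by_contra hlt
          push_neg at hlt
          exact hgood n hlt q.2 hq2 hn
        rw [← hagree n hn i (lt_of_lt_of_le hi hnu)]
        exact hq1 i hi
      · have h := hall (by simpa using hb)
        rw [← h]
        exact hq1 i hi
    · show p.2 ∈ Cyl t
      rw [← h2]; exact hq2
  · exact subset_preimage_image _ _

lemma QQ_clopen {C : ℕ → Set XX} {s : Setoid (XX × XX)}
    (hs : ∀ p q : XX × XX, s.r p q ↔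
      (p.2 = q.2 ∧ (∀ n, p.2 ∈ C n → ∀ i < n, p.1 i = q.1 i) ∧
        (p.2 ∉ ⋃ n, C n → p.1 = q.1)))
    {u t : List Bool} (hgood : Good C u t) :
    IsClopen (QQ s u t) := by
  have hR : IsClopen (RR u t) := (isClopen_Cyl u).prod (isClopen_Cyl t)
  have hqm : IsQuotientMap (Quotient.mk s) := isQuotientMap_quot_mk
  constructor
  · rw [← hqm.isClosed_preimage, sat_lemma hs hgood]; exact hR.1
  · rw [← hqm.isOpen_preimage, sat_lemma hs hgood]; exact hR.2

end Stmt13Aux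

open Filter Topology Stmt13Aux in
theorem stmt13 (C : ℕ → Set (ℕ → Bool))
    (hC : ∀ n, IsCantorSet (C n)) (hCm : ∀ n, IsMeagre (C n))
    (hdisj : Pairwise (Function.onFun Disjoint C))
    (hdense : ∀ U : Set (ℕ → Bool), IsOpen U → U.Nonempty → ∃ n, C n ⊆ U)
    (s : Setoid ((ℕ → Bool) × (ℕ → Bool)))
    (hs : ∀ p q : (ℕ → Bool) × (ℕ → Bool),
      s.r p q ↔
        (p.2 = q.2 ∧ (∀ n, p.2 ∈ C n → ∀ i < n, p.1 i = q.1 i) ∧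
          (p.2 ∉ ⋃ n, C n → p.1 = q.1))) :
    Nonempty (Quotient s ≃ₜ (ℕ → Bool)) := by
  classical
  -- each `C k` is closed
  have hCcl : ∀ k, IsClosed (C k) := by
    intro k
    obtain ⟨h⟩ := hC k
    have hrange : Set.range ((↑) ∘ h : (ℕ → Bool) → (ℕ → Bool)) = C k := by
      rw [Set.range_comp, h.surjective.range_eq, image_univ, Subtype.range_coe]
    have hcomp : IsCompact (C k) := by
      rw [← hrange]
      exact isCompact_range (continuous_subtype_val.comp h.continuous)
    exact hcomp.isClosed
  -- small cylinders around a point avoiding finitely many `C k`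
  have hfind : ∀ (m : ℕ) (bb : ℕ → Bool), (∀ k < m, bb ∉ C k) →
      ∃ j, ∀ k < m, ∀ z ∈ Cyl (apx j bb), z ∉ C k := by
    intro m bb hb
    have hbU : bb ∈ ⋂ k ∈ Finset.range m, (C k)ᶜ := by
      simp only [mem_iInter]
      intro k hk
      exact hb k (Finset.mem_range.1 hk)
    have hUopen : IsOpen (⋂ k ∈ Finset.range m, (C k)ᶜ) :=
      isOpen_biInter_finset fun k _ => (hCcl k).isOpen_compl
    obtain ⟨j, hj⟩ := exists_cyl_subset hUopen hbU
    refine ⟨j, fun k hk z hz => ?_⟩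
    have hzU := hj z (fun i' hi' => (hz i' (by simpa using hi')).trans (apx_getD hi'))
    simp only [mem_iInter] at hzU
    exact hzU k (Finset.mem_range.2 hk)
  -- separation of distinct points of the quotient by good rectangles
  have hsep : ∀ p q : Quotient s, p ≠ q →
      ∃ u t, Good C u t ∧ p ∈ QQ s u t ∧ q ∉ QQ s u t := by
    intro p q hpq
    obtain ⟨⟨a, b⟩, rfl⟩ := Quotient.exists_rep p
    obtain ⟨⟨a', b'⟩, rfl⟩ := Quotient.exists_rep q
    have hne0 : ¬ s.r (a, b) (a', b') := fun h => hpq (Quot.sound h)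
    rw [hs] at hne0
    by_cases hbb : b = b'
    · subst hbb
      have hne1 : ¬ ((∀ n, b ∈ C n → ∀ i < n, a i = a' i) ∧ ((b ∉ ⋃ n, C n) → a = a')) :=
        fun h => hne0 ⟨rfl, h.1, h.2⟩
      by_cases hQ2 : ∀ n, b ∈ C n → ∀ i < n, a i = a' i
      · have hR' : ¬ ((b ∉ ⋃ n, C n) → a = a') := fun h => hne1 ⟨hQ2, h⟩
        push_neg at hR'
        obtain ⟨hbP, haa⟩ := hR'
        obtain ⟨i, hi⟩ := Function.ne_iff.1 haa
        obtain ⟨j, hj⟩ := hfind (i + 1) b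
          (fun k _ => fun hk => hbP (mem_iUnion.2 ⟨k, hk⟩))
        have hgood : Good C (apx (i + 1) a) (apx j b) := by
          intro k hk z hz
          exact hj k (by simpa using hk) z hz
        refine ⟨_, _, hgood, ⟨(a, b), ⟨mem_Cyl_apx, mem_Cyl_apx⟩, rfl⟩, fun hqin => ?_⟩
        have h' : (a', b) ∈ RR (apx (i + 1) a) (apx j b) := by
          rw [← sat_lemma hs hgood]; exact hqin
        have h1 : a' i = a i := by
          have h2 := h'.1 i (by simp)
          rwa [apx_getD (Nat.lt_succ_self i)] at h2
        exact hi h1.symm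
      · push_neg at hQ2
        obtain ⟨n, hbn, i, hin, hai⟩ := hQ2
        obtain ⟨j, hj⟩ := hfind n b
          (fun k hk => fun hbk => (Set.disjoint_left.1 (hdisj hk.ne)) hbk hbn)
        have hgood : Good C (apx n a) (apx j b) := by
          intro k hk z hz
          exact hj k (by simpa using hk) z hz
        refine ⟨_, _, hgood, ⟨(a, b), ⟨mem_Cyl_apx, mem_Cyl_apx⟩, rfl⟩, fun hqin => ?_⟩
        have h' : (a', b) ∈ RR (apx n a) (apx j b) := by
          rw [← sat_lemma hs hgood]; exact hqin
        have h1 : a' i = a i := by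
          have h2 := h'.1 i (by simpa using hin)
          rwa [apx_getD hin] at h2
        exact hai h1.symm
    · obtain ⟨i, hi⟩ := Function.ne_iff.1 hbb
      have hgood : Good C [] (apx (i + 1) b) := by
        intro k hk
        exact absurd hk (by simp)
      refine ⟨[], apx (i + 1) b, hgood,
        ⟨(a, b), ⟨fun i' hi' => absurd hi' (by simp), mem_Cyl_apx⟩, rfl⟩, fun hqin => ?_⟩
      have h' : (a', b') ∈ RR [] (apx (i + 1) b) := by
        rw [← sat_lemma hs hgood]; exact hqin
      have h1 : b' i = b i := by
        have h2 := h'.2 i (by simp)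
        rwa [apx_getD (Nat.lt_succ_self i)] at h2
      exact hi h1.symm
  -- the quotient has no isolated points
  have hcontmk : Continuous (Quotient.mk s) := continuous_quot_mk
  have hniso : ∀ p : Quotient s, ¬ IsOpen ({p} : Set (Quotient s)) := by
    intro p hop
    obtain ⟨⟨x, y⟩, rfl⟩ := Quotient.exists_rep p
    have hpre : IsOpen (Quotient.mk s ⁻¹' {Quotient.mk s (x, y)}) :=
      hcontmk.isOpen_preimage _ hop
    have hT : IsOpen ((fun y' : ℕ → Bool => (x, y'))
        ⁻¹' (Quotient.mk s ⁻¹' {Quotient.mk s (x, y)})) :=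
      (Continuous.prodMk_right x).isOpen_preimage _ hpre
    have hsub : ((fun y' : ℕ → Bool => (x, y'))
        ⁻¹' (Quotient.mk s ⁻¹' {Quotient.mk s (x, y)})) ⊆ {y} := by
      intro y' hy'
      have heq : Quotient.mk s (x, y') = Quotient.mk s (x, y) := hy'
      have hr : s.r (x, y') (x, y) := Quotient.exact heq
      rw [hs] at hr
      exact hr.1
    have hmemy : y ∈ (fun y' : ℕ → Bool => (x, y'))
        ⁻¹' (Quotient.mk s ⁻¹' {Quotient.mk s (x, y)}) := rfl
    have heq2 : ((fun y' : ℕ → Bool => (x, y'))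
        ⁻¹' (Quotient.mk s ⁻¹' {Quotient.mk s (x, y)})) = {y} :=
      Subset.antisymm hsub (singleton_subset_iff.2 hmemy)
    exact not_isOpen_singleton y (heq2 ▸ hT)
  -- the countable separating family of clopen sets, as an embedding into Cantor space
  haveI : Denumerable (List Bool × List Bool) :=
    Denumerable.ofEncodableOfInfinite _
  let en : (List Bool × List Bool) ≃ ℕ := Denumerable.eqv _
  let Q' : (List Bool × List Bool) → Set (Quotient s) := fun m =>
    if Good C m.1 m.2 then QQ s m.1 m.2 else ∅
  have hQ'clopen : ∀ m, IsClopen (Q' m) := by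
    intro m
    show IsClopen (if Good C m.1 m.2 then QQ s m.1 m.2 else ∅)
    by_cases h : Good C m.1 m.2
    · rw [if_pos h]; exact QQ_clopen hs h
    · rw [if_neg h]; exact isClopen_empty
  let φ : Quotient s → (ℕ → Bool) := fun p n => (Q' (en.symm n)).boolIndicator p
  have hφcont : Continuous φ :=
    continuous_pi fun n => (continuous_boolIndicator_iff_isClopen _).2 (hQ'clopen _)
  have hφinj : Function.Injective φ := by
    intro p q h
    by_contra hne'
    obtain ⟨u, t, hgood, hp, hq⟩ := hsep p q hne'
    have hQ'eq : Q' (u, t) = QQ s u t := if_pos hgood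
    have hc := congrFun h (en (u, t))
    have hp' : φ p (en (u, t)) = true := by
      show (Q' (en.symm (en (u, t)))).boolIndicator p = true
      rw [Equiv.symm_apply_apply, hQ'eq]
      exact ((QQ s u t).mem_iff_boolIndicator p).1 hp
    have hq' : φ q (en (u, t)) = false := by
      show (Q' (en.symm (en (u, t)))).boolIndicator q = false
      rw [Equiv.symm_apply_apply, hQ'eq]
      exact ((QQ s u t).notMem_iff_boolIndicator q).1 hq
    rw [hp', hq'] at hc
    simp at hc
  -- `φ` is a closed embedding onto a perfect subset
  let e : Quotient s ≃ range φ :=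
    { toFun := fun p => ⟨φ p, mem_range_self p⟩
      invFun := fun z => Classical.choose z.2
      left_inv := fun p => hφinj (Classical.choose_spec (mem_range_self (f := φ) p))
      right_inv := fun z => Subtype.ext (Classical.choose_spec z.2) }
  have he : Continuous e := Continuous.subtype_mk hφcont _
  have hclosed : IsClosed (range φ) := (isCompact_range hφcont).isClosed
  have hperf : Perfect (range φ) := by
    refine ⟨hclosed, ?_⟩
    intro z hz
    obtain ⟨p, rfl⟩ := hz
    rw [accPt_iff_nhds]
    intro U hU
    have hUp : φ ⁻¹' U ∈ 𝓝 p := hφcont.continuousAt.preimage_mem_nhds hU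
    obtain ⟨V, hVsub, hVopen, hpV⟩ := mem_nhds_iff.1 hUp
    have hnsub : ¬ (V ⊆ {p}) := by
      intro hVs
      refine hniso p ?_
      rw [← Subset.antisymm hVs (singleton_subset_iff.2 hpV)]
      exact hVopen
    obtain ⟨q, hqV, hqp⟩ : ∃ q ∈ V, q ≠ p := by
      by_contra hcon
      push_neg at hcon
      exact hnsub fun q hq => hcon q hq
    exact ⟨φ q, ⟨hVsub hqV, mem_range_self q⟩, fun hEq => hqp (hφinj hEq)⟩
  have hrne : (range φ).Nonempty :=
    ⟨φ (Quotient.mk s (fun _ => false, fun _ => false)), mem_range_self _⟩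
  obtain ⟨h2⟩ := perfect_homeo (range φ) hperf hrne
  exact ⟨(Continuous.homeoOfEquivCompactToT2 (f := e) he).trans h2.symm⟩
end

section
/- For every subset T of 2^ℕ of cardinality 2^{ℵ₀} there exist a set H ⊆ T × 2^ℕ intersecting each vertical section {t} × 2^ℕ (t ∈ T) in exactly one point, and a homeomorphic copy E of H inside 2^ℕ, such that E is not countably perfectly meager in 2^ℕ; in particular T is a continuous injective image of E. -/
open Set

namespace Stmt14Aux






abbrev X := ℕ → Bool

/-- Agreement on the first `n` coordinates. -/
def Agree (x y : X) (n : ℕ) : Prop := ∀ i < n, y i = x i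

lemma isOpen_agree (x : X) (n : ℕ) : IsOpen {y : X | Agree x y n} := by
  have : {y : X | Agree x y n} = ⋂ i ∈ Finset.range n, {y : X | y i = x i} := by
    ext y; simp [Agree]
  rw [this]
  refine isOpen_biInter_finset fun i _ => ?_
  have : {y : X | y i = x i} = (fun y : X => y i) ⁻¹' {x i} := by ext y; simp
  rw [this]
  exact (isOpen_discrete _).preimage (continuous_apply i)

lemma agree_mem_nhds (x : X) (n : ℕ) : {y : X | Agree x y n} ∈ nhds x :=
  (isOpen_agree x n).mem_nhds (fun i _ => rfl)

lemma exists_agree_subset {x : X} {U : Set X} (hU : U ∈ nhds x) :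
    ∃ n, {y : X | Agree x y n} ⊆ U := by
  rw [nhds_pi, Filter.mem_pi] at hU
  obtain ⟨I, hIfin, V, hV, hVU⟩ := hU
  refine ⟨hIfin.toFinset.sup id + 1, fun y hy => hVU fun i hi => ?_⟩
  have hiI : i ∈ hIfin.toFinset := hIfin.mem_toFinset.mpr hi
  have : i < hIfin.toFinset.sup id + 1 :=
    Nat.lt_succ_of_le (Finset.le_sup (f := id) hiI)
  rw [hy i this]
  exact mem_of_mem_nhds (hV i)

lemma mem_closure_of_agree {x : X} {S : Set X}
    (h : ∀ n, ∃ y ∈ S, Agree x y n) : x ∈ closure S := by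
  rw [mem_closure_iff_nhds]
  intro U hU
  obtain ⟨n, hn⟩ := exists_agree_subset hU
  obtain ⟨y, hyS, hy⟩ := h n
  exact ⟨y, hn hy, hyS⟩

lemma closed_coord (j : ℕ) (b : Bool) : IsClosed {x : X | x j = b} := by
  have : {x : X | x j = b} = (fun x : X => x j) ⁻¹' {b} := by ext y; simp
  rw [this]
  exact (isClosed_discrete _).preimage (continuous_apply j)



/-- A finite prefix constraint. -/
def Ext (σ : List Bool) (x : X) : Prop := ∀ i < σ.length, x i = σ.getD i false

/-- Odd-slot flags of a prefix. -/
def oddp (σ : List Bool) : ℕ → Prop := fun k => 2*k+1 < σ.length ∧ σ.getD (2*k+1) false = true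

instance (σ : List Bool) : DecidablePred (oddp σ) := fun k => by unfold oddp; infer_instance

/-- Odd-slot flags of a point. -/
def qq (x : X) : ℕ → Prop := fun k => x (2*k+1) = true

instance (x : X) : DecidablePred (qq x) := fun k => by unfold qq; infer_instance

/-- The prefix codes `t` correctly. -/
def Good (t : X) (σ : List Bool) : Prop :=
  ∀ k, oddp σ k → σ.getD (2*k) false = t (Nat.count (oddp σ) k)

/-- The fiber over `t`. -/
def Fib (t : X) : Set X :=
  {x | (setOf (qq x)).Infinite ∧ ∀ k, qq x k → x (2*k) = t (Nat.count (qq x) k)}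

/-- Decoding map. -/
noncomputable def dec (x : X) : X := fun n => x (2 * Nat.nth (qq x) n)

/-- Sleeve: prefix fixed, all later odd slots off, even slots free. -/
def Sleeve (σ : List Bool) : Set X :=
  {x | Ext σ x ∧ ∀ k, σ.length ≤ 2*k+1 → x (2*k+1) = false}

lemma count_congr {p q : ℕ → Prop} [DecidablePred p] [DecidablePred q] {n : ℕ}
    (h : ∀ j < n, (p j ↔ q j)) : Nat.count p n = Nat.count q n := by
  induction n with
  | zero => rfl
  | succ n ih =>
    rw [Nat.count_succ, Nat.count_succ, ih fun j hj => h j (hj.trans (Nat.lt_succ_self n))]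
    by_cases hp : p n
    · rw [if_pos hp, if_pos ((h n (Nat.lt_succ_self n)).mp hp)]
    · rw [if_neg hp, if_neg (fun hq => hp ((h n (Nat.lt_succ_self n)).mpr hq))]

lemma dec_eq_of_mem_fib {t x : X} (hx : x ∈ Fib t) : dec x = t := by
  funext n
  have h1 : qq x (Nat.nth (qq x) n) := Nat.nth_mem_of_infinite hx.1 n
  have h2 := hx.2 _ h1
  rw [dec, h2, Nat.count_nth_of_infinite hx.1]

lemma getD_prefix {σ σ' : List Bool} (h : σ <+: σ') {i : ℕ} (hi : i < σ.length) :
    σ.getD i false = σ'.getD i false := by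
  rw [List.getD_eq_getElem _ _ hi,
    List.getD_eq_getElem _ _ (lt_of_lt_of_le hi h.length_le)]
  exact List.IsPrefix.getElem h hi

lemma oddp_prefix {σ σ' : List Bool} (h : σ <+: σ') {k : ℕ} (hk : 2*k+1 < σ.length) :
    oddp σ k ↔ oddp σ' k := by
  unfold oddp
  rw [getD_prefix h hk]
  simp [hk, lt_of_lt_of_le hk h.length_le]

lemma ext_qq_iff_oddp {σ : List Bool} {x : X} (hx : Ext σ x) {k : ℕ}
    (hk : 2*k+1 < σ.length) : qq x k ↔ oddp σ k := by
  unfold qq oddp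
  rw [hx _ hk]
  simp [hk]

/-- base point of a sleeve -/
lemma sleeve_nonempty (σ : List Bool) : (Sleeve σ).Nonempty := by
  refine ⟨fun i => σ.getD i false, fun i _ => rfl, fun k hk => ?_⟩
  exact List.getD_eq_default _ _ hk

lemma sleeve_closed (σ : List Bool) : IsClosed (Sleeve σ) := by
  have : Sleeve σ = (⋂ i ∈ Finset.range σ.length, {x : X | x i = σ.getD i false}) ∩
      ⋂ k : ℕ, {x : X | σ.length ≤ 2*k+1 → x (2*k+1) = false} := by
    ext x
    simp only [Sleeve, Ext, mem_inter_iff, mem_iInter, Finset.mem_range, mem_setOf_eq]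
  rw [this]
  refine IsClosed.inter (isClosed_biInter fun i _ => closed_coord i _) (isClosed_iInter fun k => ?_)
  by_cases h : σ.length ≤ 2*k+1
  · simp only [h, true_implies]
    exact closed_coord _ _
  · have : {x : X | σ.length ≤ 2*k+1 → x (2*k+1) = false} = univ := by
      ext x; simp [h]
    rw [this]; exact isClosed_univ

lemma sleeve_perfect (σ : List Bool) : Perfect (Sleeve σ) := by
  refine ⟨sleeve_closed σ, fun x hx => ?_⟩
  rw [accPt_iff_nhds]
  intro U hU
  obtain ⟨n, hn⟩ := exists_agree_subset hU
  set j := 2 * (max n σ.length) with hj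
  refine ⟨Function.update x j (!(x j)), ⟨hn ?_, ?_, ?_⟩, ?_⟩
  · -- Agree x (update) n
    intro i hi
    apply Function.update_of_ne
    omega
  · -- Ext σ (update)
    intro i hi
    rw [Function.update_of_ne (by omega : i ≠ j)]
    exact hx.1 i hi
  · -- odd slots
    intro k hk
    rw [Function.update_of_ne (by omega : 2*k+1 ≠ j)]
    exact hx.2 k hk
  · -- ≠ x
    intro h
    have := congrFun h j
    rw [Function.update_self] at this
    cases hxj : x j <;> rw [hxj] at this <;> simp at this



/-- Extension order on prefixes (via `getD`). -/
def Sub (σ σ' : List Bool) : Prop :=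
  σ.length ≤ σ'.length ∧ ∀ i < σ.length, σ'.getD i false = σ.getD i false

lemma Sub.refl (σ : List Bool) : Sub σ σ := ⟨le_rfl, fun _ _ => rfl⟩

lemma Sub.trans {σ₁ σ₂ σ₃ : List Bool} (h : Sub σ₁ σ₂) (h' : Sub σ₂ σ₃) : Sub σ₁ σ₃ :=
  ⟨h.1.trans h'.1, fun i hi => (h'.2 i (lt_of_lt_of_le hi h.1)).trans (h.2 i hi)⟩

lemma oddp_sub {σ σ' : List Bool} (h : Sub σ σ') {k : ℕ} (hk : 2*k+1 < σ.length) :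
    oddp σ k ↔ oddp σ' k := by
  unfold oddp
  rw [h.2 _ hk]
  simp [hk, lt_of_lt_of_le hk h.1]

lemma ext_of_sub {σ σ' : List Bool} (h : Sub σ σ') {x : X} (hx : Ext σ' x) : Ext σ x :=
  fun i hi => (hx i (lt_of_lt_of_le hi h.1)).trans (h.2 i hi)

/-- A padding extension: no new odd-slot flags. -/
def PadSub (σ σ' : List Bool) : Prop :=
  Sub σ σ' ∧ ∀ k, σ.length ≤ 2*k+1 → 2*k+1 < σ'.length → σ'.getD (2*k+1) false = false

lemma good_of_padSub {t : X} {σ σ' : List Bool} (hσ : Good t σ) (h : PadSub σ σ') :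
    Good t σ' := by
  intro k hk
  have hk2 : 2*k+1 < σ.length := by
    by_contra hle
    push_neg at hle
    exact absurd (h.2 k hle hk.1) (by rw [hk.2]; simp)
  have hkσ : oddp σ k := (oddp_sub h.1 hk2).mpr hk
  have hcnt : Nat.count (oddp σ') k = Nat.count (oddp σ) k := by
    refine count_congr fun j hj => ?_
    exact (oddp_sub h.1 (by omega)).symm
  rw [h.1.2 _ (by omega : 2*k < σ.length), hcnt]
  exact hσ k hkσ

/-- Append a replicate-false pad. -/
lemma padSub_pad (σ : List Bool) (m : ℕ) : PadSub σ (σ ++ List.replicate m false) := by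
  constructor
  · constructor
    · simp
    · intro i hi
      rw [List.getD_append _ _ _ _ hi]
  · intro k h1 h2
    rw [List.length_append, List.length_replicate] at h2
    rw [List.getD_append_right _ _ _ _ h1, List.getD_eq_getElem _ _ (by simp; omega),
      List.getElem_replicate]

/-- Append a read pair. -/
def readApp (t : X) (σ : List Bool) : List Bool :=
  σ ++ [t (Nat.count (oddp σ) (σ.length / 2)), true]

lemma readApp_sub (t : X) (σ : List Bool) : Sub σ (readApp t σ) := by
  constructor
  · simp [readApp]
  · intro i hi
    rw [readApp, List.getD_append _ _ _ _ hi]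

lemma readApp_length (t : X) (σ : List Bool) : (readApp t σ).length = σ.length + 2 := by
  simp [readApp]

lemma readApp_good {t : X} {σ : List Bool} (hσ : Good t σ) (he : Even σ.length) :
    Good t (readApp t σ) := by
  have hlen := readApp_length t σ
  obtain ⟨m, hm⟩ := he
  have hm' : σ.length = 2*m := by omega
  intro k hk
  rcases lt_trichotomy (2*k+1) σ.length with h | h | h
  · -- old slot
    have hkσ : oddp σ k := (oddp_sub (readApp_sub t σ) h).mpr hk
    have hcnt : Nat.count (oddp (readApp t σ)) k = Nat.count (oddp σ) k :=
      count_congr fun j hj => ((oddp_sub (readApp_sub t σ) (by omega)).symm)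
    rw [(readApp_sub t σ).2 _ (by omega : 2*k < σ.length), hcnt]
    exact hσ k hkσ
  · omega  -- parity: 2k+1 odd, σ.length even
  · -- the new slot: 2*k+1 = σ.length + 1, k = m
    have hk1 : 2*k+1 < σ.length + 2 := by
      have := hk.1; rwa [hlen] at this
    have hkm : k = m := by omega
    have hget : (readApp t σ).getD (2*k) false
        = t (Nat.count (oddp σ) (σ.length / 2)) := by
      rw [readApp, List.getD_append_right _ _ _ _ (by omega : σ.length ≤ 2*k)]
      have : 2*k - σ.length = 0 := by omega
      rw [this]
      rfl
    have hcnt : Nat.count (oddp (readApp t σ)) k = Nat.count (oddp σ) k :=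
      count_congr fun j hj => ((oddp_sub (readApp_sub t σ) (by omega)).symm)
    have hcnt2 : Nat.count (oddp σ) k = Nat.count (oddp σ) (σ.length / 2) := by
      rw [hkm]; congr 1; omega
    rw [hget, hcnt, hcnt2]

lemma readApp_oddp (t : X) (σ : List Bool) (he : Even σ.length) :
    oddp (readApp t σ) (σ.length / 2) := by
  obtain ⟨m, hm⟩ := he
  have hm' : σ.length = 2*m := by omega
  constructor
  · rw [readApp_length]; omega
  · rw [readApp, List.getD_append_right _ _ _ _ (by omega : σ.length ≤ 2*(σ.length/2)+1)]
    have h2 : 2*(σ.length/2)+1 - σ.length = 1 := by omega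
    rw [h2]
    rfl

/-- explicit list prefix of a point -/
def listPrefix (y : X) (N : ℕ) : List Bool := (List.range N).map y

lemma listPrefix_length (y : X) (N : ℕ) : (listPrefix y N).length = N := by
  simp [listPrefix]

lemma listPrefix_getD (y : X) {N i : ℕ} (hi : i < N) :
    (listPrefix y N).getD i false = y i := by
  rw [List.getD_eq_getElem _ _ (by simp [listPrefix_length]; omega)]
  simp [listPrefix]

/-- The avoidance dichotomy: given a closed set containing no sleeve, any prefix has a padding
extension (of arbitrary even length) whose cylinder misses the set. -/
lemma avoid_step {σ : List Bool} {C : Set X} (hC : IsClosed C)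
    (hsl : ¬ Sleeve σ ⊆ C) (L : ℕ) :
    ∃ σ', PadSub σ σ' ∧ Even σ'.length ∧ L < σ'.length ∧ ∀ x, Ext σ' x → x ∉ C := by
  by_contra hcon
  push_neg at hcon
  apply hsl
  intro y hy
  have : y ∈ closure C := by
    apply mem_closure_of_agree
    intro n
    set N := 2 * (max (max n (L+1)) σ.length) with hN
    have hσN : σ.length ≤ N := by omega
    have hpad : PadSub σ (listPrefix y N) := by
      constructor
      · constructor
        · rw [listPrefix_length]; exact hσN
        · intro i hi
          rw [listPrefix_getD y (by omega)]
          exact hy.1 i hi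
      · intro k h1 h2
        rw [listPrefix_length] at h2
        rw [listPrefix_getD y h2]
        exact hy.2 k h1
    obtain ⟨x, hx1, hx2⟩ := hcon (listPrefix y N) hpad
      (by rw [listPrefix_length]; exact ⟨max (max n (L+1)) σ.length, by omega⟩)
      (by rw [listPrefix_length]; omega)
    refine ⟨x, hx2, fun i hi => ?_⟩
    rw [hx1 i (by rw [listPrefix_length]; omega), listPrefix_getD y (by omega)]
  rwa [hC.closure_eq] at this

/-- One full step: pad-avoid then read. -/
lemma full_step {t : X} {σ : List Bool} (hσ : Good t σ) {C : Set X} (hC : IsClosed C)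
    (hsl : ∀ ρ, ¬ Sleeve ρ ⊆ C) (L : ℕ) :
    ∃ σ', Sub σ σ' ∧ Good t σ' ∧ Even σ'.length ∧ L < σ'.length ∧
      (∀ x, Ext σ' x → x ∉ C) ∧ ∃ s, L ≤ 2*s+1 ∧ oddp σ' s := by
  obtain ⟨ρ, hpad, heven, hlen, havoid⟩ := avoid_step hC (hsl σ) L
  refine ⟨readApp t ρ, (hpad.1.trans (readApp_sub t ρ)), readApp_good (good_of_padSub hσ hpad) heven, ?_, ?_, ?_, ?_⟩
  · rw [readApp_length]
    obtain ⟨m, hm⟩ := heven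
    exact ⟨m+1, by omega⟩
  · rw [readApp_length]; omega
  · intro x hx
    exact havoid x (ext_of_sub (readApp_sub t ρ) hx)
  · refine ⟨ρ.length / 2, ?_, readApp_oddp t ρ heven⟩
    obtain ⟨m, hm⟩ := heven
    omega



/-- Main lemma: a countable family of closed sets, none containing a sleeve,
misses a point of every fiber. -/
lemma main_lemma (t : X) (C : ℕ → Set X) (hC : ∀ k, IsClosed (C k))
    (hsl : ∀ k ρ, ¬ Sleeve ρ ⊆ C k) :
    ∃ x ∈ Fib t, ∀ k, x ∉ C k := by
  have step : ∀ (k : ℕ) (σ : List Bool), Good t σ →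
      ∃ σ', Sub σ σ' ∧ Good t σ' ∧ Even σ'.length ∧ (max σ.length (2*k+3)) < σ'.length ∧
        (∀ x, Ext σ' x → x ∉ C k) ∧ ∃ s, (max σ.length (2*k+3)) ≤ 2*s+1 ∧ oddp σ' s :=
    fun k σ h => full_step h (hC k) (hsl k) _
  choose! f h1 h2 _h3 h4 h5 h6 using step
  set seq : ℕ → List Bool := fun n => Nat.rec [] (fun k σ => f k σ) n with hseq
  have hseqS : ∀ k, seq (k+1) = f k (seq k) := fun k => rfl
  have hgood : ∀ n, Good t (seq n) := by
    intro n
    induction n with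
    | zero => exact fun k hk => absurd hk.1 (by simp [hseq])
    | succ n ih => rw [hseqS]; exact h2 n (seq n) ih
  have hsub1 : ∀ n, Sub (seq n) (seq (n+1)) := by
    intro n; rw [hseqS]; exact h1 n (seq n) (hgood n)
  have hchain : ∀ m n, m ≤ n → Sub (seq m) (seq n) := by
    intro m n h
    induction n with
    | zero => rw [Nat.le_zero.mp h]; exact Sub.refl _
    | succ n ih =>
      rcases Nat.lt_or_ge m (n+1) with h' | h'
      · exact (ih (by omega)).trans (hsub1 n)
      · rw [le_antisymm h h']; exact Sub.refl _
  have hlen : ∀ n, n ≤ (seq n).length := by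
    intro n
    induction n with
    | zero => simp
    | succ n ih =>
      have := h4 n (seq n) (hgood n)
      rw [hseqS]
      omega
  set x : X := fun i => (seq (i+1)).getD i false with hxdef
  have hxval : ∀ n i, i < (seq n).length → x i = (seq n).getD i false := by
    intro n i hi
    rcases le_total (i+1) n with h | h
    · have hlt : i < (seq (i+1)).length := by have := hlen (i+1); omega
      exact ((hchain (i+1) n h).2 i hlt).symm
    · exact (hchain n (i+1) h).2 i hi
  have hext : ∀ n, Ext (seq n) x := fun n i hi => hxval n i hi
  have havoid : ∀ k, x ∉ C k := by
    intro k
    have := h5 k (seq k) (hgood k)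
    rw [← hseqS] at this
    exact this x (hext (k+1))
  have hinf : (setOf (qq x)).Infinite := by
    apply Set.infinite_of_not_bddAbove
    rintro ⟨b, hb⟩
    obtain ⟨s, hs1, hs2⟩ := h6 b (seq b) (hgood b)
    rw [← hseqS] at hs2
    have hq : qq x s := (ext_qq_iff_oddp (hext (b+1)) hs2.1).mpr hs2
    have hsb : s ≤ b := hb hq
    omega
  refine ⟨x, ⟨hinf, fun s hs => ?_⟩, havoid⟩
  set n := 2*s+2 with hn
  have hlen2 : 2*s+1 < (seq n).length := by have := hlen n; omega
  have hodd : oddp (seq n) s := (ext_qq_iff_oddp (hext n) hlen2).mp hs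
  have hgn := hgood n s hodd
  rw [hxval n (2*s) (by omega), hgn]
  congr 1
  exact (count_congr fun j hj => ext_qq_iff_oddp (hext n) (by omega)).symm

/-- canonical fiber point -/
def pt (t : X) : X := fun i => if i % 2 = 1 then true else t (i/2)

lemma pt_mem_fib (t : X) : pt t ∈ Fib t := by
  have hq : ∀ k, qq (pt t) k := by
    intro k
    unfold qq pt
    have h1 : (2*k+1) % 2 = 1 := by omega
    rw [if_pos h1]
  constructor
  · have : setOf (qq (pt t)) = univ := eq_univ_of_forall hq
    rw [this]
    exact infinite_univ
  · intro k _
    have hcnt : Nat.count (qq (pt t)) k = k :=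
      Nat.count_iff_forall.mpr fun j _ => hq j
    rw [hcnt]
    unfold pt
    have h1 : ¬ ((2*k) % 2 = 1) := by omega
    rw [if_neg h1]
    have h2 : 2*k/2 = k := by omega
    rw [h2]

lemma fib_value_unique {t t' x : X} (h : x ∈ Fib t) (h' : x ∈ Fib t') : t = t' := by
  rw [← dec_eq_of_mem_fib h, ← dec_eq_of_mem_fib h']

lemma dec_agree {x x' : X} (hx : (setOf (qq x)).Infinite) (_hx' : (setOf (qq x')).Infinite)
    (n : ℕ) (h : Agree x x' (2 * Nat.nth (qq x) n + 2)) : dec x' n = dec x n := by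
  have hqx : qq x (Nat.nth (qq x) n) := Nat.nth_mem_of_infinite hx n
  have hq' : qq x' (Nat.nth (qq x) n) := by
    have hco : x' (2 * Nat.nth (qq x) n + 1) = x (2 * Nat.nth (qq x) n + 1) :=
      h _ (by omega)
    show x' (2 * Nat.nth (qq x) n + 1) = true
    rw [hco]
    exact hqx
  have hnth : Nat.nth (qq x') n = Nat.nth (qq x) n := by
    have hcnt : Nat.count (qq x') (Nat.nth (qq x) n) = n := by
      have hcg : Nat.count (qq x') (Nat.nth (qq x) n)
          = Nat.count (qq x) (Nat.nth (qq x) n) := by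
        refine count_congr fun j hj => ?_
        have hco : x' (2*j+1) = x (2*j+1) := h _ (by omega)
        show (x' (2*j+1) = true) ↔ (x (2*j+1) = true)
        rw [hco]
      rw [hcg, Nat.count_nth_of_infinite hx n]
    have hnc := Nat.nth_count hq'
    rw [hcnt] at hnc
    exact hnc
  rw [dec, dec, hnth, h _ (by omega)]

lemma continuous_dec_on {E : Set X} (hE : ∀ x ∈ E, (setOf (qq x)).Infinite) :
    Continuous (fun e : E => dec e.val) := by
  apply continuous_pi
  intro n
  rw [continuous_iff_continuousAt]
  intro e
  have hinf := hE e.val e.2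
  have hU : {y : E | Agree e.val y.val (2 * Nat.nth (qq e.val) n + 2)} ∈ nhds e := by
    have hamb := agree_mem_nhds e.val (2 * Nat.nth (qq e.val) n + 2)
    exact continuous_subtype_val.continuousAt.preimage_mem_nhds hamb
  have heq : (fun e' : E => dec e'.val n) =ᶠ[nhds e] (fun _ => dec e.val n) := by
    filter_upwards [hU] with y hy
    exact dec_agree hinf (hE y.val y.2) n hy
  exact ContinuousAt.congr continuousAt_const heq.symm


lemma not_isMeagre_univ_sleeve (σ : List Bool) :
    ¬ IsMeagre (univ : Set (Sleeve σ)) := by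
  have hcpt : IsCompact (Sleeve σ) := (sleeve_closed σ).isCompact
  haveI : CompactSpace (Sleeve σ) := isCompact_iff_compactSpace.mp hcpt
  haveI hne : Nonempty (Sleeve σ) := (sleeve_nonempty σ).to_subtype
  haveI : LocallyCompactSpace (Sleeve σ) := WeaklyLocallyCompactSpace.locallyCompactSpace
  intro hm
  unfold IsMeagre at hm
  rw [compl_univ] at hm
  have hd : Dense (∅ : Set (Sleeve σ)) := dense_of_mem_residual hm
  obtain ⟨x⟩ := hne
  simpa using hd x

lemma not_isMeagre_preimage_of_sleeve_subset {F : Set X} {σ : List Bool}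
    (hFP : Sleeve σ ⊆ F) : ¬ IsMeagre ((↑) ⁻¹' F : Set (Sleeve σ)) := by
  have : ((↑) ⁻¹' F : Set (Sleeve σ)) = univ := by
    apply eq_univ_of_forall
    intro y
    exact hFP y.2
  rw [this]
  exact not_isMeagre_univ_sleeve σ

lemma card_closeds_le :
    Cardinal.mk {C : Set X // IsClosed C} ≤ Cardinal.continuum := by
  have key : ∀ C D : {C : Set X // IsClosed C},
      {σ : List Bool | ∃ x ∈ C.val, Ext σ x} = {σ : List Bool | ∃ x ∈ D.val, Ext σ x} →
      C.val ⊆ D.val := by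
    intro C D h x hx
    have hcl : x ∈ closure D.val := by
      apply mem_closure_of_agree
      intro n
      have hmem : listPrefix x n ∈ {σ : List Bool | ∃ x ∈ C.val, Ext σ x} :=
        ⟨x, hx, fun i hi => (listPrefix_getD x (by rwa [listPrefix_length] at hi)).symm⟩
      rw [h] at hmem
      obtain ⟨y, hyD, hy⟩ := hmem
      refine ⟨y, hyD, fun i hi => ?_⟩
      rw [hy i (by rwa [listPrefix_length]), listPrefix_getD x hi]
    rwa [D.2.closure_eq] at hcl
  have hinj : Function.Injective (fun C : {C : Set X // IsClosed C} =>
      {σ : List Bool | ∃ x ∈ C.val, Ext σ x}) := by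
    intro C D h
    exact Subtype.ext (le_antisymm (key C D h) (key D C h.symm))
  calc Cardinal.mk {C : Set X // IsClosed C}
      ≤ Cardinal.mk (Set (List Bool)) := Cardinal.mk_le_of_injective hinj
    _ = 2 ^ Cardinal.mk (List Bool) := Cardinal.mk_set
    _ = 2 ^ Cardinal.aleph0 := by rw [Cardinal.mk_list_eq_aleph0]
    _ = Cardinal.continuum := Cardinal.two_power_aleph0

lemma card_fsigma_le :
    Cardinal.mk {F : Set X // IsFsigma F} ≤ Cardinal.continuum := by
  classical
  set Φ : {F : Set X // IsFsigma F} → (ℕ → {C : Set X // IsClosed C}) :=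
    fun F n => ⟨F.2.choose n, F.2.choose_spec.1 n⟩ with hΦ
  have hinj : Function.Injective Φ := by
    intro F F' h
    apply Subtype.ext
    have hch : F.2.choose = F'.2.choose := by
      funext n
      have := congrFun h n
      simpa [hΦ, Subtype.ext_iff] using this
    rw [F.2.choose_spec.2, F'.2.choose_spec.2, hch]
  calc Cardinal.mk {F : Set X // IsFsigma F}
      ≤ Cardinal.mk (ℕ → {C : Set X // IsClosed C}) := Cardinal.mk_le_of_injective hinj
    _ = Cardinal.mk {C : Set X // IsClosed C} ^ Cardinal.aleph0 := by
        rw [← Cardinal.power_def, Cardinal.mk_nat]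
    _ ≤ Cardinal.continuum ^ Cardinal.aleph0 :=
        Cardinal.power_le_power_right card_closeds_le
    _ = Cardinal.continuum := Cardinal.continuum_power_aleph0



lemma core (T : Set X) (hT : Cardinal.mk T = Cardinal.continuum) :
    ∃ (E : Set X) (g : E → X),
      ¬ CPM E ∧ Continuous g ∧ Function.Injective g ∧ Set.range g = T := by
  classical
  haveI hFne : Nonempty {F : Set X // IsFsigma F} :=
    ⟨⟨∅, fun _ => ∅, fun _ => isClosed_empty, by simp⟩⟩
  have hle : Cardinal.mk {F : Set X // IsFsigma F} ≤ Cardinal.mk T := by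
    rw [hT]; exact card_fsigma_le
  obtain ⟨emb⟩ := (Cardinal.le_def _ _).mp hle
  set Φ : T → {F : Set X // IsFsigma F} := Function.invFun emb with hΦ
  have hΦsurj : Function.Surjective Φ := Function.invFun_surjective emb.injective
  set pick : T → X := fun t =>
    if h : ∃ x ∈ Fib (t : X), x ∉ (Φ t).val then h.choose else pt (t : X) with hpick
  have hpickFib : ∀ t : T, pick t ∈ Fib (t : X) := by
    intro t
    rw [hpick]
    dsimp only
    split
    · rename_i h
      exact h.choose_spec.1
    · exact pt_mem_fib _
  set E : Set X := Set.range pick with hE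
  have hEinfq : ∀ x ∈ E, (setOf (qq x)).Infinite := by
    rintro x ⟨t, rfl⟩
    exact (hpickFib t).1
  have hdec : ∀ t : T, dec (pick t) = (t : X) := fun t => dec_eq_of_mem_fib (hpickFib t)
  refine ⟨E, fun e => dec e.val, ?_, continuous_dec_on hEinfq, ?_, ?_⟩
  · -- ¬ CPM E
    intro hcpm
    obtain ⟨enum, henum⟩ := exists_surjective_nat (List Bool)
    have hPerf : ∀ n, PerfectSet (Sleeve (enum n)) :=
      fun n => ⟨sleeve_perfect _, sleeve_nonempty _⟩
    obtain ⟨F, hFσ, hEF, hmeag⟩ := hcpm (fun n => Sleeve (enum n)) hPerf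
    obtain ⟨t₀, ht₀⟩ := hΦsurj ⟨F, hFσ⟩
    obtain ⟨s, hscl, hsU⟩ := hFσ
    have hsl : ∀ k ρ, ¬ Sleeve ρ ⊆ s k := by
      intro k ρ hsub
      obtain ⟨n, hn⟩ := henum ρ
      have hsubF : Sleeve ρ ⊆ F := hsub.trans (by rw [hsU]; exact subset_iUnion s k)
      have := hmeag n
      rw [MeagerIn, hn] at this
      exact not_isMeagre_preimage_of_sleeve_subset hsubF this
    obtain ⟨x, hxFib, hxC⟩ := main_lemma (t₀ : X) s hscl hsl
    have hxF : x ∉ F := by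
      rw [hsU]
      intro hx
      obtain ⟨k, hk⟩ := mem_iUnion.mp hx
      exact hxC k hk
    have hex : ∃ y ∈ Fib (t₀ : X), y ∉ (Φ t₀).val := ⟨x, hxFib, by rw [ht₀]; exact hxF⟩
    have hnot : pick t₀ ∉ (Φ t₀).val := by
      rw [hpick]
      dsimp only
      rw [dif_pos hex]
      exact hex.choose_spec.2
    apply hnot
    rw [ht₀]
    exact hEF ⟨t₀, rfl⟩
  · -- injective
    intro e e' h
    obtain ⟨t, ht⟩ := e.2
    obtain ⟨t', ht'⟩ := e'.2
    have h1 : (t : X) = (t' : X) := by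
      rw [← hdec t, ← hdec t', ht, ht']
      exact h
    have h2 : t = t' := Subtype.ext h1
    apply Subtype.ext
    rw [← ht, ← ht', h2]
  · -- range
    apply Set.eq_of_subset_of_subset
    · rintro y ⟨e, rfl⟩
      obtain ⟨t, ht⟩ := e.2
      show dec ↑e ∈ T
      rw [← ht, hdec t]
      exact t.2
    · intro y hy
      exact ⟨⟨pick ⟨y, hy⟩, ⟨y, hy⟩, rfl⟩, hdec ⟨y, hy⟩⟩


end Stmt14Aux

theorem stmt14 (T : Set (ℕ → Bool)) (hT : Cardinal.mk T = Cardinal.continuum) :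
    ∃ H : Set ((ℕ → Bool) × (ℕ → Bool)),
      (∀ p ∈ H, p.1 ∈ T) ∧
      (∀ t ∈ T, ∃! y : ℕ → Bool, (t, y) ∈ H) ∧
      ∃ E : Set (ℕ → Bool), Nonempty (H ≃ₜ E) ∧ ¬ CPM E ∧
        ∃ g : E → (ℕ → Bool), Continuous g ∧ Function.Injective g ∧
          Set.range g = T := by
  obtain ⟨E, g, hncpm, hc, hi, hr⟩ := Stmt14Aux.core T hT
  refine ⟨Set.range (fun e : E => (g e, (e : ℕ → Bool))), ?_, ?_, E, ⟨?_⟩, hncpm, g, hc, hi, hr⟩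
  · rintro p ⟨e, rfl⟩
    show g e ∈ T
    rw [← hr]; exact Set.mem_range_self e
  · intro t ht
    rw [← hr] at ht
    obtain ⟨e₀, he₀⟩ := ht
    refine ⟨(e₀ : ℕ → Bool), ⟨e₀, by show (g e₀, _) = _; rw [he₀]⟩, ?_⟩
    rintro y ⟨e, he⟩
    have h1 : g e = t := congrArg Prod.fst he
    have h2 : (e : ℕ → Bool) = y := congrArg Prod.snd he
    have : e = e₀ := hi (h1.trans he₀.symm)
    rw [← h2, this]
  · -- Homeomorph between the graph H and E
    have hmem : ∀ p : Set.range (fun e : E => (g e, (e : ℕ → Bool))),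
        p.val.2 ∈ E := by rintro ⟨p, e, rfl⟩; exact e.2
    have hval : ∀ p : Set.range (fun e : E => (g e, (e : ℕ → Bool))),
        g ⟨p.val.2, hmem p⟩ = p.val.1 := by
      rintro ⟨p, e, rfl⟩
      have : (⟨((fun e : E => (g e, (e : ℕ → Bool))) e).2,
          hmem ⟨_, e, rfl⟩⟩ : E) = e := Subtype.ext rfl
      rw [this]
    exact
      { toFun := fun p => ⟨p.val.2, hmem p⟩
        invFun := fun e => ⟨(g e, (e : ℕ → Bool)), Set.mem_range_self e⟩
        left_inv := by
          intro p
          apply Subtype.ext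
          exact Prod.ext (hval p) rfl
        right_inv := by
          intro e
          apply Subtype.ext
          rfl
        continuous_toFun := by
          apply Continuous.subtype_mk
          exact continuous_snd.comp continuous_subtype_val
        continuous_invFun := by
          apply Continuous.subtype_mk
          exact hc.prodMk continuous_subtype_val }
end
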